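/- arXiv:1201.1818 — 4 statements merged into one kernel-verified Lean document; each statement's English description precedes it below -/
import Mathlib

section
/- Let (M,d) be a metric space with a σ-finite Borel measure μ, let m ≥ 1, 1 ≤ p < ∞, and write X = L^p(μ; ℂ^m). Let D : Dom(D) ⊆ X → X be a densely defined linear operator and let V : ℝ → B(X) be a C₀ group generated by iD. Let η : M → ℝ be a bounded Lipschitz function such that η·u ∈ Dom(D) for every u ∈ Dom(D), and suppose C_η ∈ B(X) is a bounded operator satisfying C_η u = η·(Du) − D(η·u) for all u ∈ Dom(D). Then for every t ∈ ℝ and every u ∈ X, η·(V(t)u) − V(t)(η·u) = i·t·∫₀¹ V(st) C_η V((1−s)t) u ds, where the integral is a Bochner integral in X over s ∈ [0,1]. -/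
open MeasureTheory Complex Filter Topology Set

section aux
variable {X : Type*} [NormedAddCommGroup X] [NormedSpace ℂ X] [NormedSpace ℝ X]
  [IsScalarTower ℝ ℂ X] [CompleteSpace X]

lemma aux_bound (V : ℝ → X →L[ℂ] X) (hVcont : ∀ u, Continuous fun t => V t u)
    (a b : ℝ) : ∃ C, 0 ≤ C ∧ ∀ s ∈ Set.Icc a b, ‖V s‖ ≤ C := by
  have h : ∀ x : X, ∃ C, ∀ s : Set.Icc a b, ‖V (s : ℝ) x‖ ≤ C := by
    intro x
    obtain ⟨C, hC⟩ := (isCompact_Icc (a := a) (b := b)).exists_bound_of_continuousOn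
      ((hVcont x).continuousOn)
    exact ⟨C, fun s => hC s s.2⟩
  obtain ⟨C, hC⟩ := banach_steinhaus (g := fun s : Set.Icc a b => V (s : ℝ)) h
  exact ⟨max C 0, le_max_right _ _, fun s hs => le_trans (hC ⟨s, hs⟩) (le_max_left _ _)⟩

lemma aux_jointCont (V : ℝ → X →L[ℂ] X) (hVcont : ∀ u, Continuous fun t => V t u) :
    Continuous fun q : ℝ × X => V q.1 q.2 := by
  rw [continuous_iff_continuousAt]
  rintro ⟨s₀, x₀⟩
  obtain ⟨C, hC0, hC⟩ := aux_bound V hVcont (s₀ - 1) (s₀ + 1)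
  have h1 : Tendsto (fun q : ℝ × X => V q.1 (q.2 - x₀)) (𝓝 (s₀, x₀)) (𝓝 0) := by
    refine squeeze_zero_norm' (a := fun q : ℝ × X => C * ‖q.2 - x₀‖) ?_ ?_
    · have hmem : Set.Icc (s₀ - 1) (s₀ + 1) ∈ 𝓝 s₀ := Icc_mem_nhds (by linarith) (by linarith)
      have hev : ∀ᶠ q : ℝ × X in 𝓝 (s₀, x₀), q.1 ∈ Set.Icc (s₀ - 1) (s₀ + 1) :=
        (continuous_fst.tendsto (s₀, x₀)).eventually_mem hmem
      filter_upwards [hev] with q hq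
      calc ‖V q.1 (q.2 - x₀)‖ ≤ ‖V q.1‖ * ‖q.2 - x₀‖ := (V q.1).le_opNorm _
        _ ≤ C * ‖q.2 - x₀‖ := by gcongr; exact hC _ hq
    · have : Tendsto (fun q : ℝ × X => ‖q.2 - x₀‖) (𝓝 (s₀, x₀)) (𝓝 0) := by
        have h0 : Continuous fun q : ℝ × X => ‖q.2 - x₀‖ :=
          (continuous_snd.sub continuous_const).norm
        simpa using h0.tendsto (s₀, x₀)
      simpa using this.const_mul C
  have h2 : Tendsto (fun q : ℝ × X => V q.1 x₀) (𝓝 (s₀, x₀)) (𝓝 (V s₀ x₀)) :=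
    ((hVcont x₀).comp continuous_fst).tendsto (s₀, x₀)
  have h3 := h1.add h2
  rw [zero_add] at h3
  exact h3.congr fun q => by simp [map_sub]

lemma aux_prodDeriv (V : ℝ → X →L[ℂ] X) (hVcont : ∀ u, Continuous fun t => V t u)
    (c : ℝ) {w : ℝ → X} {w' : X} {s₀ : ℝ} (hw : HasDerivAt w w' s₀)
    {d : X} (hd : HasDerivAt (fun s => V (s * c) (w s₀)) d s₀) :
    HasDerivAt (fun s => V (s * c) (w s)) (V (s₀ * c) w' + d) s₀ := by
  have key : HasDerivAt (fun s => V (s * c) (w s - w s₀)) (V (s₀ * c) w') s₀ := by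
    rw [hasDerivAt_iff_tendsto_slope]
    have hsl := hasDerivAt_iff_tendsto_slope.mp hw
    have hcont := (aux_jointCont V hVcont).continuousAt (x := ((s₀ * c : ℝ), w'))
    have ht : Tendsto (fun s => ((s * c : ℝ), slope w s₀ s)) (𝓝[≠] s₀) (𝓝 (s₀ * c, w')) :=
      (((continuous_id.mul continuous_const).tendsto s₀).mono_left nhdsWithin_le_nhds).prodMk_nhds hsl
    refine (hcont.tendsto.comp ht).congr' ?_
    filter_upwards [self_mem_nhdsWithin] with s hs
    simp only [Function.comp, slope_def_module, sub_self, map_zero, sub_zero, ContinuousLinearMap.map_smul_of_tower]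
  have h := key.add hd
  refine h.congr_of_eventuallyEq (Eventually.of_forall fun s => ?_)
  simp [map_sub]

end aux

set_option maxHeartbeats 1000000

/-- **Commutator formula for `C₀` groups** (McIntosh–Morris, Lemma 3.4):
`[ηI, e^{itD}]u = it ∫₀¹ e^{istD} [ηI, D] e^{i(1-s)tD} u ds`. -/
theorem commutator_group_formula
    {M : Type*} [MetricSpace M] [MeasurableSpace M] [BorelSpace M]
    (μ : Measure M) [SigmaFinite μ]
    (m : ℕ) (hm : 1 ≤ m) (p : ENNReal) [hp1 : Fact (1 ≤ p)] (hp2 : p ≠ ⊤)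
    (Dom : Submodule ℂ (Lp (EuclideanSpace ℂ (Fin m)) p μ))
    (hdense : Dense (Dom : Set (Lp (EuclideanSpace ℂ (Fin m)) p μ)))
    (D : Lp (EuclideanSpace ℂ (Fin m)) p μ → Lp (EuclideanSpace ℂ (Fin m)) p μ)
    (hDadd : ∀ u ∈ Dom, ∀ v ∈ Dom, D (u + v) = D u + D v)
    (hDsmul : ∀ (a : ℂ), ∀ u ∈ Dom, D (a • u) = a • D u)
    (V : ℝ → Lp (EuclideanSpace ℂ (Fin m)) p μ →L[ℂ]
      Lp (EuclideanSpace ℂ (Fin m)) p μ)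
    (hV0 : V 0 = ContinuousLinearMap.id ℂ _)
    (hVgrp : ∀ s t : ℝ, V (s + t) = (V s).comp (V t))
    (hVcont : ∀ u, Continuous fun t => V t u)
    (hVdom : ∀ t : ℝ, ∀ u ∈ Dom, V t u ∈ Dom)
    (hVderiv : ∀ t : ℝ, ∀ u ∈ Dom,
      HasDerivAt (fun s => V s u) (Complex.I • V t (D u)) t)
    (hVD : ∀ t : ℝ, ∀ u ∈ Dom, V t (D u) = D (V t u))
    (η : M → ℝ) (L : NNReal) (hηLip : LipschitzWith L η) (hηbdd : ∃ C, ∀ x, |η x| ≤ C)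
    (Mη : Lp (EuclideanSpace ℂ (Fin m)) p μ →L[ℂ] Lp (EuclideanSpace ℂ (Fin m)) p μ)
    (hMη : ∀ u, (Mη u : M → EuclideanSpace ℂ (Fin m))
      =ᵐ[μ] fun x => (η x : ℂ) • (u : M → EuclideanSpace ℂ (Fin m)) x)
    (hMηdom : ∀ u ∈ Dom, Mη u ∈ Dom)
    (Cη : Lp (EuclideanSpace ℂ (Fin m)) p μ →L[ℂ] Lp (EuclideanSpace ℂ (Fin m)) p μ)
    (hCη : ∀ u ∈ Dom, Cη u = Mη (D u) - D (Mη u))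
    (t : ℝ) (u : Lp (EuclideanSpace ℂ (Fin m)) p μ) :
    Mη (V t u) - V t (Mη u) =
      (Complex.I * (t : ℂ)) •
        ∫ s in (0:ℝ)..1, V (s * t) (Cη (V ((1 - s) * t) u)) := by
  -- the integrand
  have hFcont : ∀ v : Lp (EuclideanSpace ℂ (Fin m)) p μ, Continuous fun s => V (s * t) (Cη (V ((1 - s) * t) v)) := by
    intro v
    have h1 : Continuous fun s : ℝ => Cη (V ((1 - s) * t) v) :=
      Cη.continuous.comp ((hVcont v).comp
        ((continuous_const.sub continuous_id).mul continuous_const))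
    exact (aux_jointCont V hVcont).comp
      (((continuous_id.mul continuous_const)).prodMk h1)
  -- Step 1: the formula for v ∈ Dom
  have hdom : ∀ v ∈ Dom, Mη (V t v) - V t (Mη v) =
      (Complex.I * (t : ℂ)) • ∫ s in (0:ℝ)..1, V (s * t) (Cη (V ((1 - s) * t) v)) := by
    intro v hv
    have hderiv : ∀ s₀ : ℝ, HasDerivAt (fun s => V (s * t) (Mη (V ((1 - s) * t) v)))
        ((-(Complex.I * (t : ℂ))) • V (s₀ * t) (Cη (V ((1 - s₀) * t) v))) s₀ := by
      intro s₀
      have hvdom : V ((1 - s₀) * t) v ∈ Dom := hVdom _ _ hv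
      have hinner : HasDerivAt (fun s => V ((1 - s) * t) v)
          ((-t) • (Complex.I • V ((1 - s₀) * t) (D v))) s₀ := by
        have h1 : HasDerivAt (fun τ : ℝ => V τ v)
            (Complex.I • V ((1 - s₀) * t) (D v)) ((1 - s₀) * t) := hVderiv _ _ hv
        have h2 : HasDerivAt (fun s : ℝ => (1 - s) * t) (-t) s₀ := by
          simpa using ((hasDerivAt_id s₀).const_sub 1).mul_const t
        exact h1.scomp s₀ h2
      have hw : HasDerivAt (fun s => Mη (V ((1 - s) * t) v))
          (Mη ((-t) • (Complex.I • V ((1 - s₀) * t) (D v)))) s₀ :=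
        (Mη.hasFDerivAt.restrictScalars ℝ).comp_hasDerivAt s₀ hinner
      have hφ : HasDerivAt (fun s => V (s * t) (Mη (V ((1 - s₀) * t) v)))
          (t • (Complex.I • V (s₀ * t) (D (Mη (V ((1 - s₀) * t) v))))) s₀ := by
        have h1 : HasDerivAt (fun τ : ℝ => V τ (Mη (V ((1 - s₀) * t) v)))
            (Complex.I • V (s₀ * t) (D (Mη (V ((1 - s₀) * t) v)))) (s₀ * t) :=
          hVderiv _ _ (hMηdom _ hvdom)
        have h2 : HasDerivAt (fun s : ℝ => s * t) t s₀ := by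
          simpa using (hasDerivAt_id s₀).mul_const t
        exact h1.scomp s₀ h2
      have h := aux_prodDeriv V hVcont t hw hφ
      have heq : V (s₀ * t) (Mη ((-t) • (Complex.I • V ((1 - s₀) * t) (D v)))) +
          t • (Complex.I • V (s₀ * t) (D (Mη (V ((1 - s₀) * t) v)))) =
          (-(Complex.I * (t : ℂ))) • V (s₀ * t) (Cη (V ((1 - s₀) * t) v)) := by
        rw [hCη _ hvdom, hVD _ _ hv, map_sub]
        simp only [ContinuousLinearMap.map_smul_of_tower, _root_.map_smul]
        match_scalars <;> (simp only [Complex.coe_algebraMap]; ring)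
      rw [heq] at h
      exact h
    have hcont : Continuous fun s =>
        (-(Complex.I * (t : ℂ))) • V (s * t) (Cη (V ((1 - s) * t) v)) :=
      (hFcont v).const_smul (-(Complex.I * (t : ℂ)))
    have hint := intervalIntegral.integral_eq_sub_of_hasDerivAt
      (f := fun s => V (s * t) (Mη (V ((1 - s) * t) v)))
      (f' := fun s => (-(Complex.I * (t : ℂ))) • V (s * t) (Cη (V ((1 - s) * t) v)))
      (fun s _ => hderiv s) (hcont.intervalIntegrable 0 1)
    rw [intervalIntegral.integral_smul] at hint
    simp only [zero_mul, one_mul, sub_zero, sub_self, hV0,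
      ContinuousLinearMap.id_apply] at hint
    rw [neg_smul, neg_eq_iff_eq_neg] at hint
    rw [hint, neg_sub]
  -- Step 2: density
  obtain ⟨K, hK0, hK⟩ := aux_bound V hVcont (-|t|) |t|
  have hmemIcc : ∀ s ∈ Set.Icc (0:ℝ) 1, ∀ r : ℝ, |r| ≤ 1 → r * t ∈ Set.Icc (-|t|) |t| := by
    intro s hs r hr
    have : |r * t| ≤ |t| := by
      rw [abs_mul]
      nlinarith [abs_nonneg t, abs_nonneg r]
    exact Set.mem_Icc.mpr (abs_le.mp this)
  have hbound : ∀ w : Lp (EuclideanSpace ℂ (Fin m)) p μ, ‖∫ s in (0:ℝ)..1, V (s * t) (Cη (V ((1 - s) * t) w))‖ ≤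
      K * (‖Cη‖ * (K * ‖w‖)) := by
    intro w
    have h := intervalIntegral.norm_integral_le_of_norm_le_const
      (a := (0:ℝ)) (b := 1) (C := K * (‖Cη‖ * (K * ‖w‖)))
      (f := fun s => V (s * t) (Cη (V ((1 - s) * t) w))) ?_
    · simpa using h
    · intro s hs
      rw [Set.uIoc_of_le (by norm_num : (0:ℝ) ≤ 1)] at hs
      have hs' : s ∈ Set.Icc (0:ℝ) 1 := Set.Ioc_subset_Icc_self hs
      have h1 : ‖V (s * t)‖ ≤ K :=
        hK _ (hmemIcc s hs' s (abs_le.mpr ⟨by linarith [hs'.1], hs'.2⟩))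
      have h2 : ‖V ((1 - s) * t)‖ ≤ K :=
        hK _ (hmemIcc s hs' (1 - s) (abs_le.mpr ⟨by linarith [hs'.2], by linarith [hs'.1]⟩))
      calc ‖V (s * t) (Cη (V ((1 - s) * t) w))‖
          ≤ ‖V (s * t)‖ * ‖Cη (V ((1 - s) * t) w)‖ := (V (s * t)).le_opNorm _
        _ ≤ K * (‖Cη‖ * (K * ‖w‖)) := by
            refine mul_le_mul h1 ?_ (norm_nonneg _) hK0
            calc ‖Cη (V ((1 - s) * t) w)‖ ≤ ‖Cη‖ * ‖V ((1 - s) * t) w‖ := Cη.le_opNorm _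
              _ ≤ ‖Cη‖ * (K * ‖w‖) := by
                  refine mul_le_mul_of_nonneg_left ?_ (norm_nonneg _)
                  calc ‖V ((1 - s) * t) w‖ ≤ ‖V ((1 - s) * t)‖ * ‖w‖ :=
                        (V ((1 - s) * t)).le_opNorm _
                    _ ≤ K * ‖w‖ := mul_le_mul_of_nonneg_right h2 (norm_nonneg _)
  have hIntCont : Continuous fun v : Lp (EuclideanSpace ℂ (Fin m)) p μ => ∫ s in (0:ℝ)..1, V (s * t) (Cη (V ((1 - s) * t) v)) := by
    rw [continuous_iff_continuousAt]
    intro v₀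
    rw [ContinuousAt, ← tendsto_sub_nhds_zero_iff]
    have hsub : ∀ v : Lp (EuclideanSpace ℂ (Fin m)) p μ, (∫ s in (0:ℝ)..1, V (s * t) (Cη (V ((1 - s) * t) v))) -
        (∫ s in (0:ℝ)..1, V (s * t) (Cη (V ((1 - s) * t) v₀))) =
        ∫ s in (0:ℝ)..1, V (s * t) (Cη (V ((1 - s) * t) (v - v₀))) := by
      intro v
      rw [← intervalIntegral.integral_sub ((hFcont v).intervalIntegrable 0 1)
        ((hFcont v₀).intervalIntegrable 0 1)]
      congr 1
      funext s
      simp [map_sub]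
    refine squeeze_zero_norm (a := fun v => K * (‖Cη‖ * (K * ‖v - v₀‖))) (fun v => ?_) ?_
    · rw [hsub v]
      exact hbound (v - v₀)
    · have h0 : Continuous fun v : Lp (EuclideanSpace ℂ (Fin m)) p μ => K * (‖Cη‖ * (K * ‖v - v₀‖)) := by
        exact continuous_const.mul (continuous_const.mul (continuous_const.mul (continuous_id.sub continuous_const).norm))
      have := h0.tendsto v₀
      simpa using this
  have hΦcont : Continuous fun v : Lp (EuclideanSpace ℂ (Fin m)) p μ => Mη (V t v) - V t (Mη v) :=
    (Mη.continuous.comp (V t).continuous).sub ((V t).continuous.comp Mη.continuous)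
  have hΨcont : Continuous fun v : Lp (EuclideanSpace ℂ (Fin m)) p μ =>
      (Complex.I * (t : ℂ)) • ∫ s in (0:ℝ)..1, V (s * t) (Cη (V ((1 - s) * t) v)) :=
    hIntCont.const_smul (Complex.I * (t : ℂ))
  have hfinal := Continuous.ext_on hdense hΦcont hΨcont (fun v hv => hdom v hv)
  exact congrFun hfinal u
end

section
/- Let (M,d) be a metric space with a σ-finite Borel measure μ, let m ≥ 1, 1 ≤ p < ∞, and write X = L^p(μ;ℂ^m). Let D : Dom(D) ⊆ X → X be a densely defined linear operator and let V : ℝ → B(X) be a C₀ group generated by iD satisfying ‖V(t)‖ ≤ c·e^{ω|t|} for all t ∈ ℝ, for some c ≥ 1 and ω ≥ 0. Let η : M → ℝ be a bounded Lipschitz function such that η·u ∈ Dom(D) for all u ∈ Dom(D), and suppose C_η ∈ B(X) satisfies C_η u = η·(Du) − D(η·u) for all u ∈ Dom(D) and commutes with M_η. Define δ(S) := M_η S − S M_η, δ⁰(S) := S, δ^{n+1}(S) := δ(δⁿ(S)). Then for every n ∈ ℕ (n ≥ 0) and every t ∈ ℝ, the operator norm satisfies ‖δⁿ(V(t))‖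 ≤ (c·|t|·‖C_η‖)ⁿ · c·e^{ω|t|}. -/
open MeasureTheory Filter intervalIntegral

section Aux
variable {X : Type*} [NormedAddCommGroup X] [NormedSpace ℂ X]

lemma aux_tendsto_V (V : ℝ → X →L[ℂ] X) (c ω : ℝ)
    (hVbound : ∀ t : ℝ, ‖V t‖ ≤ c * Real.exp (ω * |t|))
    (hVcont : ∀ u, Continuous fun t => V t u)
    {l : Filter ℝ} {φ : ℝ → ℝ} {f : ℝ → X} {a : ℝ} {d : X}
    (hφ : Tendsto φ l (nhds a)) (hf : Tendsto f l (nhds d)) :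
    Tendsto (fun σ => V (φ σ) (f σ)) l (nhds (V a d)) := by
  rw [tendsto_iff_norm_sub_tendsto_zero]
  have key : ∀ σ, ‖V (φ σ) (f σ) - V a d‖ ≤
      c * Real.exp (ω * |φ σ|) * ‖f σ - d‖ + ‖V (φ σ) d - V a d‖ := by
    intro σ
    refine (norm_sub_le_norm_sub_add_norm_sub _ (V (φ σ) d) _).trans ?_
    gcongr
    rw [← map_sub]
    exact ((V (φ σ)).le_opNorm _).trans
      (mul_le_mul_of_nonneg_right (hVbound _) (norm_nonneg _))
  have h1 : Tendsto (fun σ => c * Real.exp (ω * |φ σ|) * ‖f σ - d‖) l (nhds 0) := by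
    have hb : Tendsto (fun σ => c * Real.exp (ω * |φ σ|)) l
        (nhds (c * Real.exp (ω * |a|))) :=
      ((continuous_const.mul (Real.continuous_exp.comp
        (continuous_const.mul _root_.continuous_abs))).tendsto a).comp hφ
    have hn : Tendsto (fun σ => ‖f σ - d‖) l (nhds 0) := by
      rwa [tendsto_iff_norm_sub_tendsto_zero] at hf
    simpa using hb.mul hn
  have h2 : Tendsto (fun σ => ‖V (φ σ) d - V a d‖) l (nhds 0) := by
    have hco : Continuous fun r => ‖V r d - V a d‖ :=
      ((hVcont d).sub continuous_const).norm
    have := (hco.tendsto a).comp hφ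
    simpa [Function.comp_def] using this
  have h3 := h1.add h2
  rw [add_zero] at h3
  exact squeeze_zero (fun σ => norm_nonneg _) key h3

lemma aux_abs_integral (n : ℕ) (t : ℝ) :
    |∫ s in (0:ℝ)..t, |s| ^ n| = |t| ^ (n + 1) / (n + 1) := by
  rcases le_or_gt 0 t with ht | ht
  · have h1 : (∫ s in (0:ℝ)..t, |s| ^ n) = ∫ s in (0:ℝ)..t, s ^ n := by
      apply intervalIntegral.integral_congr
      intro s hs
      rw [Set.uIcc_of_le ht] at hs
      show |s| ^ n = s ^ n
      rw [_root_.abs_of_nonneg hs.1]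
    rw [h1, integral_pow, _root_.abs_of_nonneg ht, abs_div,
      _root_.abs_of_nonneg (by simp [zero_pow (Nat.succ_ne_zero n)]; positivity :
        (0:ℝ) ≤ t ^ (n+1) - 0 ^ (n+1)),
      _root_.abs_of_nonneg (by positivity : (0:ℝ) ≤ (n:ℝ) + 1)]
    simp
  · have h1 : (∫ s in (0:ℝ)..t, |s| ^ n) = ∫ s in (0:ℝ)..t, (-s) ^ n := by
      apply intervalIntegral.integral_congr
      intro s hs
      rw [Set.uIcc_of_ge ht.le] at hs
      show |s| ^ n = (-s) ^ n
      rw [_root_.abs_of_nonpos hs.2]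
    rw [h1]
    rw [show (∫ s in (0:ℝ)..t, (-s) ^ n) = ∫ x in -t..-(0:ℝ), x ^ n from
      intervalIntegral.integral_comp_neg (fun x => x ^ n)]
    rw [integral_pow, _root_.abs_of_neg ht, abs_div,
      _root_.abs_of_nonneg (by positivity : (0:ℝ) ≤ (n:ℝ) + 1)]
    rw [_root_.abs_of_nonpos, neg_sub]
    · simp [zero_pow (Nat.succ_ne_zero n)]
    · simp only [neg_zero, zero_pow (Nat.succ_ne_zero n), zero_sub]
      have h2 : (0:ℝ) ≤ (-t) ^ (n+1) := pow_nonneg (neg_nonneg.mpr ht.le) _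
      linarith

lemma abs_add_abs_of_uIoc {s t : ℝ} (hs : s ∈ Set.uIoc (0:ℝ) t) :
    |t - s| + |s| = |t| := by
  rcases le_or_gt 0 t with ht | ht
  · rw [Set.uIoc_of_le ht] at hs
    rw [_root_.abs_of_nonneg hs.1.le, _root_.abs_of_nonneg (sub_nonneg.mpr hs.2),
      _root_.abs_of_nonneg ht]
    ring
  · rw [Set.uIoc_of_ge ht.le] at hs
    rw [_root_.abs_of_nonpos hs.2, _root_.abs_of_nonpos (by linarith [hs.1] : t - s ≤ 0),
      _root_.abs_of_neg ht]
    ring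


def gIter (Mη : X →L[ℂ] X) (V : ℝ → X →L[ℂ] X) (k : ℕ) (s : ℝ) : X →L[ℂ] X :=
  (fun T => Mη.comp T - T.comp Mη)^[k] (V s)

lemma gIter_zero (Mη : X →L[ℂ] X) (V : ℝ → X →L[ℂ] X) (s : ℝ) :
    gIter Mη V 0 s = V s := rfl

lemma gIter_succ_apply (Mη : X →L[ℂ] X) (V : ℝ → X →L[ℂ] X) (k : ℕ) (s : ℝ) (u : X) :
    gIter Mη V (k+1) s u = Mη (gIter Mη V k s u) - gIter Mη V k s (Mη u) := by
  rw [gIter, Function.iterate_succ_apply']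
  rfl
end Aux

set_option maxHeartbeats 2000000 in
/-- **Norm bound for iterated commutators** (McIntosh–Morris, equation (3.6)):
`‖δⁿ(e^{itD})‖ ≤ (c|t|‖C_η‖)ⁿ c e^{ω|t|}`. -/
theorem iterated_commutator_norm_bound
    {M : Type*} [MetricSpace M] [MeasurableSpace M] [BorelSpace M]
    (μ : Measure M) [SigmaFinite μ]
    (m : ℕ) (hm : 1 ≤ m) (p : ENNReal) [hp1 : Fact (1 ≤ p)] (hp2 : p ≠ ⊤)
    (Dom : Submodule ℂ (Lp (EuclideanSpace ℂ (Fin m)) p μ))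
    (hdense : Dense (Dom : Set (Lp (EuclideanSpace ℂ (Fin m)) p μ)))
    (D : Lp (EuclideanSpace ℂ (Fin m)) p μ → Lp (EuclideanSpace ℂ (Fin m)) p μ)
    (hDadd : ∀ u ∈ Dom, ∀ v ∈ Dom, D (u + v) = D u + D v)
    (hDsmul : ∀ (a : ℂ), ∀ u ∈ Dom, D (a • u) = a • D u)
    (V : ℝ → Lp (EuclideanSpace ℂ (Fin m)) p μ →L[ℂ]
      Lp (EuclideanSpace ℂ (Fin m)) p μ)
    (c ω : ℝ) (hc : 1 ≤ c) (hω : 0 ≤ ω)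
    (hV0 : V 0 = ContinuousLinearMap.id ℂ _)
    (hVgrp : ∀ s t : ℝ, V (s + t) = (V s).comp (V t))
    (hVcont : ∀ u, Continuous fun t => V t u)
    (hVdom : ∀ t : ℝ, ∀ u ∈ Dom, V t u ∈ Dom)
    (hVderiv : ∀ t : ℝ, ∀ u ∈ Dom,
      HasDerivAt (fun s => V s u) (Complex.I • V t (D u)) t)
    (hVD : ∀ t : ℝ, ∀ u ∈ Dom, V t (D u) = D (V t u))
    (hVbound : ∀ t : ℝ, ‖V t‖ ≤ c * Real.exp (ω * |t|))
    (η : M → ℝ) (L : NNReal) (hηLip : LipschitzWith L η) (hηbdd : ∃ C, ∀ x, |η x| ≤ C)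
    (Mη : Lp (EuclideanSpace ℂ (Fin m)) p μ →L[ℂ] Lp (EuclideanSpace ℂ (Fin m)) p μ)
    (hMη : ∀ u, (Mη u : M → EuclideanSpace ℂ (Fin m))
      =ᵐ[μ] fun x => (η x : ℂ) • (u : M → EuclideanSpace ℂ (Fin m)) x)
    (hMηdom : ∀ u ∈ Dom, Mη u ∈ Dom)
    (Cη : Lp (EuclideanSpace ℂ (Fin m)) p μ →L[ℂ] Lp (EuclideanSpace ℂ (Fin m)) p μ)
    (hCη : ∀ u ∈ Dom, Cη u = Mη (D u) - D (Mη u))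
    (hCηMη : ∀ u, Mη (Cη u) = Cη (Mη u))
    (n : ℕ) (t : ℝ) :
    ‖(fun T => Mη.comp T - T.comp Mη)^[n] (V t)‖ ≤
      (c * |t| * ‖Cη‖) ^ n * (c * Real.exp (ω * |t|)) := by
  have hc0 : (0:ℝ) ≤ c := zero_le_one.trans hc
  have hDsub : ∀ u ∈ Dom, ∀ v ∈ Dom, D (u - v) = D u - D v := by
    intro u hu v hv
    have h1 : u - v = u + (-1 : ℂ) • v := by
      rw [neg_one_smul, ← sub_eq_add_neg]
    rw [h1, hDadd u hu _ (Dom.smul_mem _ hv), hDsmul _ v hv, neg_one_smul,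
      ← sub_eq_add_neg]
  have hmem : ∀ k (s : ℝ), ∀ u ∈ Dom, gIter Mη V k s u ∈ Dom := by
    intro k
    induction k with
    | zero => intro s u hu; exact hVdom s u hu
    | succ k ih =>
      intro s u hu
      rw [gIter_succ_apply]
      exact Dom.sub_mem (hMηdom _ (ih s u hu)) (ih s _ (hMηdom u hu))
  have hzero : ∀ k (u : Lp (EuclideanSpace ℂ (Fin m)) p μ),
      gIter Mη V (k+1) 0 u = 0 := by
    intro k
    induction k with
    | zero =>
      intro u
      rw [gIter_succ_apply, gIter_zero, hV0]
      simp
    | succ k ih =>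
      intro u
      rw [gIter_succ_apply, ih u, ih (Mη u), map_zero, sub_zero]
  have hgcont : ∀ k (u : Lp (EuclideanSpace ℂ (Fin m)) p μ),
      Continuous fun s => gIter Mη V k s u := by
    intro k
    induction k with
    | zero => intro u; exact hVcont u
    | succ k ih =>
      intro u
      simp only [gIter_succ_apply]
      exact (Mη.continuous.comp (ih u)).sub (ih (Mη u))
  have hder : ∀ k (t : ℝ), ∀ u ∈ Dom, HasDerivAt (fun s => gIter Mη V k s u)
      (Complex.I • D (gIter Mη V k t u) +
        (k : ℂ) • (Complex.I • Cη (gIter Mη V (k-1) t u))) t := by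
    intro k
    induction k with
    | zero =>
      intro t u hu
      simp only [Nat.cast_zero, zero_smul, add_zero, gIter_zero]
      rw [← hVD t u hu]
      exact hVderiv t u hu
    | succ k ih =>
      intro t u hu
      have hu' := hMηdom u hu
      have h1 := ih t u hu
      have h2 := ih t (Mη u) hu'
      have hw : gIter Mη V k t u ∈ Dom := hmem k t u hu
      have hw' : gIter Mη V k t (Mη u) ∈ Dom := hmem k t _ hu'
      have hMder : HasDerivAt (fun s => Mη (gIter Mη V k s u))
          (Mη (Complex.I • D (gIter Mη V k t u) +
            (k : ℂ) • (Complex.I • Cη (gIter Mη V (k-1) t u)))) t := by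
        exact ((Mη.restrictScalars ℝ).hasFDerivAt (x := gIter Mη V k t u)).comp_hasDerivAt t h1
      have h3 := hMder.sub h2
      have heq : (fun s => Mη (gIter Mη V k s u) - gIter Mη V k s (Mη u))
          = fun s => gIter Mη V (k+1) s u := by
        funext s; rw [gIter_succ_apply]
      rw [show (fun s => Mη (gIter Mη V k s u)) - (fun s => gIter Mη V k s (Mη u))
          = fun s => gIter Mη V (k+1) s u from heq] at h3
      convert h3 using 1
      · rfl
      · rfl
      have e1 : Mη (D (gIter Mη V k t u))
          = Cη (gIter Mη V k t u) + D (Mη (gIter Mη V k t u)) := by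
        rw [hCη _ hw, sub_add_cancel]
      have e2 : D (gIter Mη V (k+1) t u)
          = D (Mη (gIter Mη V k t u)) - D (gIter Mη V k t (Mη u)) := by
        rw [← hDsub _ (hMηdom _ hw) _ hw', ← gIter_succ_apply]
      have e3 : (k : ℂ) • (Complex.I • Cη (gIter Mη V k t u))
          = (k : ℂ) • (Complex.I • (Cη (Mη (gIter Mη V (k-1) t u))
            - Cη (gIter Mη V (k-1) t (Mη u)))) := by
        cases k with
        | zero => simp
        | succ k' =>
          rw [← map_sub, ← gIter_succ_apply]
          norm_num
      simp only [map_add, _root_.map_smul, Nat.add_sub_cancel]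
      rw [e1, hCηMη, Nat.cast_succ, add_smul, one_smul, e2, e3]
      module
  show ‖gIter Mη V n t‖ ≤ (c * |t| * ‖Cη‖) ^ n * (c * Real.exp (ω * |t|))
  induction n generalizing t with
  | zero =>
    simpa [gIter_zero] using hVbound t
  | succ n ih =>
    have hKnn : (0:ℝ) ≤ (c * |t| * ‖Cη‖) ^ (n+1) * (c * Real.exp (ω * |t|)) :=
      mul_nonneg (pow_nonneg (mul_nonneg (mul_nonneg hc0 (abs_nonneg t)) (norm_nonneg _)) _)
        (mul_nonneg hc0 (Real.exp_pos _).le)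
    have hKdom : ∀ u ∈ Dom, ‖gIter Mη V (n+1) t u‖ ≤
        (c * |t| * ‖Cη‖) ^ (n+1) * (c * Real.exp (ω * |t|)) * ‖u‖ := by
      intro u hu
      have hFder : ∀ s : ℝ, HasDerivAt (fun σ => V (t - σ) (gIter Mη V (n+1) σ u))
          ((((n+1:ℕ) : ℂ) * Complex.I) • V (t - s) (Cη (gIter Mη V n s u))) s := by
        intro s
        have hw : gIter Mη V (n+1) s u ∈ Dom := hmem (n+1) s u hu
        have hdn := hder (n+1) s u hu
        have hh : HasDerivAt (fun σ : ℝ => t - σ) (-1) s := (hasDerivAt_id s).const_sub t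
        have hB0 := HasDerivAt.scomp (x := s)
          (hVderiv (t - s) (gIter Mη V (n+1) s u) hw) hh
        have hB : HasDerivAt (fun σ => V (t - σ) (gIter Mη V (n+1) s u))
            ((-1 : ℝ) • (Complex.I • V (t - s) (D (gIter Mη V (n+1) s u)))) s := hB0
        have hA : HasDerivAt
            (fun σ => V (t - σ) (gIter Mη V (n+1) σ u - gIter Mη V (n+1) s u))
            (V (t - s) (Complex.I • D (gIter Mη V (n+1) s u) +
              ((n+1:ℕ) : ℂ) • (Complex.I • Cη (gIter Mη V n s u)))) s := by
          rw [hasDerivAt_iff_tendsto_slope]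
          have heq : slope
              (fun σ => V (t - σ) (gIter Mη V (n+1) σ u - gIter Mη V (n+1) s u)) s
              = fun σ => V (t - σ) (slope (fun σ' => gIter Mη V (n+1) σ' u) s σ) := by
            funext σ
            rw [slope_def_module, slope_def_module]
            simp only [sub_self, map_zero, sub_zero]
            rw [← (V (t - σ)).map_smul_of_tower]
          rw [heq]
          have hφ : Tendsto (fun σ : ℝ => t - σ) (nhdsWithin s {s}ᶜ) (nhds (t - s)) :=
            ((continuous_const.sub continuous_id).tendsto s).mono_left nhdsWithin_le_nhds
          have hsl := hasDerivAt_iff_tendsto_slope.mp hdn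
          exact aux_tendsto_V V c ω hVbound hVcont hφ hsl
        have hsum : (fun σ => V (t - σ) (gIter Mη V (n+1) σ u))
            = fun σ => V (t - σ) (gIter Mη V (n+1) σ u - gIter Mη V (n+1) s u)
              + V (t - σ) (gIter Mη V (n+1) s u) := by
          funext σ
          rw [← map_add, sub_add_cancel]
        rw [hsum]
        have hAB : HasDerivAt (fun σ => V (t - σ) (gIter Mη V (n+1) σ u - gIter Mη V (n+1) s u)
            + V (t - σ) (gIter Mη V (n+1) s u)) _ s := hA.add hB
        convert hAB using 1
        simp only [map_add, _root_.map_smul, neg_one_smul]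
        module
      have hfcont : Continuous (fun s =>
          (((n+1:ℕ) : ℂ) * Complex.I) • V (t - s) (Cη (gIter Mη V n s u))) := by
        refine (show Continuous fun s => V (t - s) (Cη (gIter Mη V n s u)) from ?_).fun_const_smul _
        rw [continuous_iff_continuousAt]
        intro s
        exact aux_tendsto_V V c ω hVbound hVcont
          ((continuous_const.sub continuous_id).tendsto s)
          ((Cη.continuous.comp (hgcont n u)).tendsto s)
      have hInt : gIter Mη V (n+1) t u = ∫ s in (0:ℝ)..t,
          (((n+1:ℕ) : ℂ) * Complex.I) • V (t - s) (Cη (gIter Mη V n s u)) := by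
        have h0 := intervalIntegral.integral_eq_sub_of_hasDerivAt
          (f := fun σ => V (t - σ) (gIter Mη V (n+1) σ u))
          (f' := fun s => (((n+1:ℕ) : ℂ) * Complex.I) • V (t - s) (Cη (gIter Mη V n s u)))
          (fun s _ => hFder s) (hfcont.intervalIntegrable 0 t)
        have h0' : (∫ s in (0:ℝ)..t,
            (((n+1:ℕ) : ℂ) * Complex.I) • V (t - s) (Cη (gIter Mη V n s u)))
            = V (t - t) (gIter Mη V (n+1) t u) - V (t - 0) (gIter Mη V (n+1) 0 u) := h0
        rw [sub_self, sub_zero, hV0, hzero n u, map_zero, sub_zero,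
          ContinuousLinearMap.id_apply] at h0'
        exact h0'.symm
      have hpt : ∀ s ∈ Set.uIoc (0:ℝ) t,
          ‖(((n+1:ℕ) : ℂ) * Complex.I) • V (t - s) (Cη (gIter Mη V n s u))‖ ≤
          ((n:ℝ)+1) * (c^(n+2) * ‖Cη‖^(n+1) * Real.exp (ω * |t|) * ‖u‖) * |s|^n := by
        intro s hs
        have habs : |t - s| + |s| = |t| := abs_add_abs_of_uIoc hs
        have h1 : ‖(((n+1:ℕ) : ℂ) * Complex.I) • V (t - s) (Cη (gIter Mη V n s u))‖
            = ((n:ℝ)+1) * ‖V (t - s) (Cη (gIter Mη V n s u))‖ := by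
          rw [norm_smul, norm_mul, Complex.norm_I, mul_one, Complex.norm_natCast]
          push_cast
          ring
        rw [h1]
        have h2 : ‖V (t - s) (Cη (gIter Mη V n s u))‖ ≤
            (c * Real.exp (ω * |t - s|)) *
              (‖Cη‖ * (((c * |s| * ‖Cη‖) ^ n * (c * Real.exp (ω * |s|))) * ‖u‖)) := by
          refine ((V (t-s)).le_opNorm _).trans ?_
          refine mul_le_mul (hVbound _) ?_ (norm_nonneg _)
            (mul_nonneg hc0 (Real.exp_pos _).le)
          refine (Cη.le_opNorm _).trans ?_
          refine mul_le_mul_of_nonneg_left ?_ (norm_nonneg Cη)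
          refine ((gIter Mη V n s).le_opNorm u).trans ?_
          exact mul_le_mul_of_nonneg_right (ih s) (norm_nonneg u)
        calc ((n:ℝ)+1) * ‖V (t - s) (Cη (gIter Mη V n s u))‖
            ≤ ((n:ℝ)+1) * ((c * Real.exp (ω * |t - s|)) *
              (‖Cη‖ * (((c * |s| * ‖Cη‖) ^ n * (c * Real.exp (ω * |s|))) * ‖u‖))) :=
              mul_le_mul_of_nonneg_left h2 (by positivity)
          _ = ((n:ℝ)+1) * (c^(n+2) * ‖Cη‖^(n+1) * Real.exp (ω * |t|) * ‖u‖) * |s|^n := by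
              rw [← habs, mul_add, Real.exp_add, mul_pow, mul_pow]
              ring
      have hKnn2 : (0:ℝ) ≤ ((n:ℝ)+1) * (c^(n+2) * ‖Cη‖^(n+1) * Real.exp (ω * |t|) * ‖u‖) := by
        have : (0:ℝ) ≤ c ^ (n+2) := pow_nonneg hc0 _
        positivity
      have hnorm : ‖gIter Mη V (n+1) t u‖ ≤
          |∫ s in (0:ℝ)..t, ((n:ℝ)+1) * (c^(n+2) * ‖Cη‖^(n+1) * Real.exp (ω * |t|) * ‖u‖) * |s|^n| := by
        rw [hInt]
        refine intervalIntegral.norm_integral_le_abs_of_norm_le ?_ ?_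
        · exact (ae_restrict_iff' measurableSet_uIoc).mpr (Filter.Eventually.of_forall hpt)
        · exact ((continuous_const.mul (_root_.continuous_abs.pow n)).intervalIntegrable 0 t)
      rw [intervalIntegral.integral_const_mul, abs_mul, aux_abs_integral n t,
        _root_.abs_of_nonneg hKnn2] at hnorm
      refine hnorm.trans (le_of_eq ?_)
      have hn1 : ((n:ℝ)+1) ≠ 0 := by positivity
      field_simp
      ring
    refine (gIter Mη V (n+1) t).opNorm_le_bound hKnn ?_
    intro u
    have hcl : IsClosed {v : Lp (EuclideanSpace ℂ (Fin m)) p μ |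
        ‖gIter Mη V (n+1) t v‖ ≤ (c * |t| * ‖Cη‖) ^ (n+1) * (c * Real.exp (ω * |t|)) * ‖v‖} :=
      isClosed_le ((gIter Mη V (n+1) t).continuous.norm)
        (continuous_const.mul continuous_norm)
    exact closure_minimal (fun v hv => hKdom v hv) hcl (hdense u)
end

section
/- Let (M,d) be a metric space with a σ-finite Borel measure μ, let m ≥ 1, 1 ≤ p < ∞, and write X = L^p(μ;ℂ^m). Let D : Dom(D) ⊆ X → X be a densely defined linear operator and let V : ℝ → B(X) be a C₀ group generated by iD satisfying ‖V(t)‖ ≤ c·e^{ω|t|} for all t ∈ ℝ, for some c ≥ 1 and ω ≥ 0. Let K ⊆ M, let u ∈ X vanish μ-a.e. on M∖K, and let t ∈ ℝ. Suppose η : M → ℝ is a bounded Lipschitz function with η(x) = 1 for all x ∈ K, such that η·w ∈ Dom(D) for all w ∈ Dom(D), the operator C_η ∈ B(X) satisfies C_η w = η·(Dw) − D(η·w) for all w ∈ Dom(D), C_η commutes with M_η, and c·|t|·‖C_η‖ < 1. Then V(t)u vanishes μ-a.e. on the complement of the support of η, i.e. V(t)u = 0 μ-a.e. on the open set of points possessing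 a neighbourhood on which η vanishes identically. -/
set_option linter.unusedSectionVars false
set_option maxHeartbeats 1000000

open MeasureTheory Complex intervalIntegral

section Abstract

variable {X : Type*} [NormedAddCommGroup X] [NormedSpace ℂ X] [CompleteSpace X]

/-- The iterated commutator integrals. -/
noncomputable def Gop (V : ℝ → X →L[ℂ] X) (C : X →L[ℂ] X) : ℕ → ℝ → X → X
  | 0, s, w => V s w
  | (n+1), s, w => (-Complex.I) • ∫ r in (0:ℝ)..s,
      ∑ j ∈ (Finset.range (n+1)).attach,
        ((n.choose j.1 : ℕ) : ℂ) • Gop V C j.1 (s - r) (C (Gop V C (n - j.1) r w))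
  termination_by n => n
  decreasing_by
  · exact Nat.lt_succ_of_le (Nat.sub_le n j.1)
  · exact Finset.mem_range.mp j.2

variable (V : ℝ → X →L[ℂ] X) (C : X →L[ℂ] X)

lemma Gop_zero (s : ℝ) (w : X) : Gop V C 0 s w = V s w := by rw [Gop.eq_1]

lemma Gop_succ (n : ℕ) (s : ℝ) (w : X) :
    Gop V C (n+1) s w = (-Complex.I) • ∫ r in (0:ℝ)..s,
      ∑ j ∈ Finset.range (n+1),
        ((n.choose j : ℕ) : ℂ) • Gop V C j (s - r) (C (Gop V C (n - j) r w)) := by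
  rw [Gop.eq_2]
  congr 1
  refine intervalIntegral.integral_congr fun r _ => ?_
  exact Finset.sum_attach (Finset.range (n+1))
    (fun j => ((n.choose j : ℕ) : ℂ) • Gop V C j (s - r) (C (Gop V C (n - j) r w)))


lemma Vjoint (c ω : ℝ) (hVc : ∀ w : X, Continuous fun s => V s w)
    (hVb : ∀ s : ℝ, ‖V s‖ ≤ c * Real.exp (ω * |s|)) :
    Continuous fun q : ℝ × X => V q.1 q.2 := by
  rw [continuous_iff_continuousAt]
  rintro ⟨s₀, w₀⟩
  rw [ContinuousAt, tendsto_iff_norm_sub_tendsto_zero]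
  have key : ∀ q : ℝ × X, ‖V q.1 q.2 - V s₀ w₀‖ ≤
      c * Real.exp (ω * |q.1|) * ‖q.2 - w₀‖ + ‖V q.1 w₀ - V s₀ w₀‖ := by
    intro q
    have h1 : V q.1 q.2 - V s₀ w₀ = V q.1 (q.2 - w₀) + (V q.1 w₀ - V s₀ w₀) := by
      rw [map_sub]; abel
    rw [h1]
    refine (norm_add_le _ _).trans ?_
    gcongr
    refine ((V q.1).le_opNorm _).trans ?_
    gcongr
    exact hVb q.1
  have hbc : Continuous fun q : ℝ × X =>
      c * Real.exp (ω * |q.1|) * ‖q.2 - w₀‖ + ‖V q.1 w₀ - V s₀ w₀‖ := by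
    apply Continuous.add
    · exact (continuous_const.mul ((Real.continuous_exp.comp
        (continuous_const.mul continuous_fst.abs)))).mul
        ((continuous_snd.sub continuous_const).norm)
    · exact (((hVc w₀).comp continuous_fst).sub continuous_const).norm
  have hbt : Filter.Tendsto (fun q : ℝ × X =>
      c * Real.exp (ω * |q.1|) * ‖q.2 - w₀‖ + ‖V q.1 w₀ - V s₀ w₀‖)
      (nhds (s₀, w₀)) (nhds 0) := by
    have := hbc.tendsto (s₀, w₀)
    simpa using this
  exact squeeze_zero_norm (fun q => by simpa using key q) hbt

lemma Gcont (hVj : Continuous fun q : ℝ × X => V q.1 q.2) (n : ℕ) :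
    Continuous fun q : ℝ × X => Gop V C n q.1 q.2 := by
  induction n using Nat.strong_induction_on with
  | _ n ih =>
    obtain _ | k := n
    · simpa only [Gop_zero] using hVj
    · have hjc : ∀ j, j < k + 1 → ∀ {f : (ℝ × X) × ℝ → ℝ} {g : (ℝ × X) × ℝ → X},
          Continuous f → Continuous g → Continuous fun a => Gop V C j (f a) (g a) := by
        intro j hj f g hf hg
        exact (ih j hj).comp (hf.prodMk hg)
      have hunc : Continuous fun qr : (ℝ × X) × ℝ =>
          ∑ j ∈ Finset.range (k + 1),
            ((k.choose j : ℕ) : ℂ) •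
              Gop V C j (qr.1.1 - qr.2) (C (Gop V C (k - j) qr.2 qr.1.2)) := by
        apply continuous_finset_sum
        intro j hj
        have hjk := Finset.mem_range.mp hj
        refine Continuous.const_smul ?_ ((k.choose j : ℕ) : ℂ)
        refine hjc j hjk ?_ ?_
        · exact (continuous_fst.comp continuous_fst).sub continuous_snd
        · refine C.continuous.comp ?_
          refine hjc (k - j) (Nat.lt_succ_of_le (Nat.sub_le _ _)) ?_ ?_
          · exact continuous_snd
          · exact continuous_snd.comp continuous_fst
      have : Continuous fun q : ℝ × X => ∫ r in (0:ℝ)..q.1,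
          ∑ j ∈ Finset.range (k + 1),
            ((k.choose j : ℕ) : ℂ) • Gop V C j (q.1 - r) (C (Gop V C (k - j) r q.2)) :=
        intervalIntegral.continuous_parametric_intervalIntegral_of_continuous
          (f := fun (q : ℝ × X) (r : ℝ) => ∑ j ∈ Finset.range (k + 1),
            ((k.choose j : ℕ) : ℂ) • Gop V C j (q.1 - r) (C (Gop V C (k - j) r q.2)))
          hunc continuous_fst
      simpa only [Gop_succ, Pi.smul_def] using this.const_smul (-Complex.I)

lemma Gcont2 (hVj : Continuous fun q : ℝ × X => V q.1 q.2) (n : ℕ)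
    {α : Type*} [TopologicalSpace α] {f : α → ℝ} {g : α → X}
    (hf : Continuous f) (hg : Continuous g) :
    Continuous fun a => Gop V C n (f a) (g a) :=
  (Gcont V C hVj n).comp (hf.prodMk hg)

lemma Gintegrable (hVj : Continuous fun q : ℝ × X => V q.1 q.2) (n : ℕ) (s : ℝ) (w : X) :
    IntervalIntegrable (fun r => ∑ j ∈ Finset.range (n + 1),
      ((n.choose j : ℕ) : ℂ) • Gop V C j (s - r) (C (Gop V C (n - j) r w)))
      MeasureTheory.volume 0 s := by
  apply Continuous.intervalIntegrable
  apply continuous_finset_sum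
  intro j hj
  exact (Gcont2 V C hVj j (continuous_const.sub continuous_id)
    (C.continuous.comp (Gcont2 V C hVj (n - j) continuous_id continuous_const))).const_smul _


lemma Gop_add (hVj : Continuous fun q : ℝ × X => V q.1 q.2) (n : ℕ) (s : ℝ) (w w' : X) :
    Gop V C n s (w + w') = Gop V C n s w + Gop V C n s w' := by
  induction n using Nat.strong_induction_on generalizing s w w' with
  | _ n ih =>
    obtain _ | k := n
    · simp only [Gop_zero, map_add]
    · rw [Gop_succ, Gop_succ, Gop_succ, ← smul_add]
      congr 1
      rw [← intervalIntegral.integral_add (Gintegrable V C hVj k s w)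
        (Gintegrable V C hVj k s w')]
      refine intervalIntegral.integral_congr fun r _ => ?_
      rw [← Finset.sum_add_distrib]
      refine Finset.sum_congr rfl fun j hj => ?_
      have hjk := Nat.lt_succ_iff.mp (Finset.mem_range.mp hj)
      rw [ih (k - j) (Nat.lt_succ_of_le (Nat.sub_le _ _)) r w w', map_add,
        ih j (Nat.lt_succ_of_le hjk) (s - r) _ _, smul_add]

lemma Gop_zero_vec (hVj : Continuous fun q : ℝ × X => V q.1 q.2) (n : ℕ) (s : ℝ) :
    Gop V C n s 0 = 0 := by
  have := Gop_add V C hVj n s 0 0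
  rw [add_zero] at this
  exact (left_eq_add.mp this)

lemma abs_split {s r : ℝ} (hr : r ∈ Set.uIoc 0 s) : |s - r| + |r| = |s| := by
  rcases Set.mem_uIoc.mp hr with ⟨h1, h2⟩ | ⟨h1, h2⟩
  · rw [_root_.abs_of_nonneg (by linarith : (0:ℝ) ≤ s - r), _root_.abs_of_nonneg (by linarith : (0:ℝ) ≤ r),
      _root_.abs_of_nonneg (by linarith : (0:ℝ) ≤ s)]
    ring
  · rw [_root_.abs_of_nonpos (by linarith : s - r ≤ 0), _root_.abs_of_nonpos (by linarith : r ≤ 0),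
      _root_.abs_of_nonpos (by linarith : s ≤ 0)]
    ring

lemma Gop_norm_le (hVj : Continuous fun q : ℝ × X => V q.1 q.2) {c ω : ℝ} (hc : 0 ≤ c)
    (hVb : ∀ s : ℝ, ‖V s‖ ≤ c * Real.exp (ω * |s|)) (n : ℕ) (s : ℝ) (w : X) :
    ‖Gop V C n s w‖ ≤ c ^ (n + 1) * Real.exp (ω * |s|) * (‖C‖ * |s|) ^ n * ‖w‖ := by
  induction n using Nat.strong_induction_on generalizing s w with
  | _ n ih =>
    obtain _ | k := n
    · simp only [Gop_zero, zero_add, pow_one, pow_zero, mul_one]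
      exact ((V s).le_opNorm w).trans (by gcongr; exact hVb s)
    · have key : ∀ r ∈ Set.uIoc 0 s,
          ‖∑ j ∈ Finset.range (k + 1), ((k.choose j : ℕ) : ℂ) •
              Gop V C j (s - r) (C (Gop V C (k - j) r w))‖ ≤
            c ^ (k + 2) * Real.exp (ω * |s|) * ‖C‖ ^ (k + 1) * ‖w‖ * |s| ^ k := by
        intro r hr
        have habs : |s - r| + |r| = |s| := abs_split hr
        refine (norm_sum_le _ _).trans ?_
        have hterm : ∀ j ∈ Finset.range (k + 1),
            ‖((k.choose j : ℕ) : ℂ) • Gop V C j (s - r) (C (Gop V C (k - j) r w))‖ ≤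
              (c ^ (k + 2) * Real.exp (ω * |s|) * ‖C‖ ^ (k + 1) * ‖w‖) *
                (|s - r| ^ j * |r| ^ (k - j) * (k.choose j : ℝ)) := by
          intro j hj
          have hjk := Nat.lt_succ_iff.mp (Finset.mem_range.mp hj)
          rw [norm_smul]
          have h0 : ‖((k.choose j : ℕ) : ℂ)‖ = (k.choose j : ℝ) := by
            simp
          rw [h0]
          have h1 : ‖Gop V C j (s - r) (C (Gop V C (k - j) r w))‖ ≤
              c ^ (j + 1) * Real.exp (ω * |s - r|) * (‖C‖ * |s - r|) ^ j *
                (‖C‖ * (c ^ (k - j + 1) * Real.exp (ω * |r|) * (‖C‖ * |r|) ^ (k - j) * ‖w‖)) := by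
            refine (ih j (Nat.lt_succ_of_le hjk) _ _).trans ?_
            refine mul_le_mul_of_nonneg_left ?_ (by positivity)
            refine (C.le_opNorm _).trans ?_
            exact mul_le_mul_of_nonneg_left
              (ih (k - j) (Nat.lt_succ_of_le (Nat.sub_le _ _)) _ _) (norm_nonneg _)
          have e1 : c ^ (j + 1) * c ^ (k - j + 1) = c ^ (k + 2) := by
            rw [← pow_add]; congr 1; omega
          have e2 : ‖C‖ ^ j * (‖C‖ * ‖C‖ ^ (k - j)) = ‖C‖ ^ (k + 1) := by
            rw [← pow_succ', ← pow_add]; congr 1; omega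
          have e3 : Real.exp (ω * |s - r|) * Real.exp (ω * |r|) = Real.exp (ω * |s|) := by
            rw [← Real.exp_add, ← mul_add, habs]
          calc (k.choose j : ℝ) * ‖Gop V C j (s - r) (C (Gop V C (k - j) r w))‖
              ≤ (k.choose j : ℝ) * (c ^ (j + 1) * Real.exp (ω * |s - r|) * (‖C‖ * |s - r|) ^ j *
                (‖C‖ * (c ^ (k - j + 1) * Real.exp (ω * |r|) * (‖C‖ * |r|) ^ (k - j) * ‖w‖))) := by
                exact mul_le_mul_of_nonneg_left h1 (Nat.cast_nonneg _)
            _ = (c ^ (j + 1) * c ^ (k - j + 1)) *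
                  (Real.exp (ω * |s - r|) * Real.exp (ω * |r|)) *
                  (‖C‖ ^ j * (‖C‖ * ‖C‖ ^ (k - j))) * ‖w‖ *
                  (|s - r| ^ j * |r| ^ (k - j) * (k.choose j : ℝ)) := by
                rw [mul_pow, mul_pow]; ring
            _ = (c ^ (k + 2) * Real.exp (ω * |s|) * ‖C‖ ^ (k + 1) * ‖w‖) *
                  (|s - r| ^ j * |r| ^ (k - j) * (k.choose j : ℝ)) := by
                rw [e1, e2, e3]
        refine (Finset.sum_le_sum hterm).trans ?_
        rw [← Finset.mul_sum, ← add_pow, habs]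
      have hnorm : ‖Gop V C (k + 1) s w‖ ≤
          (c ^ (k + 2) * Real.exp (ω * |s|) * ‖C‖ ^ (k + 1) * ‖w‖ * |s| ^ k) * |s - 0| := by
        rw [Gop_succ, norm_smul]
        simp only [norm_neg, Complex.norm_I, one_mul, norm_I]
        exact intervalIntegral.norm_integral_le_of_norm_le_const key
      refine hnorm.trans (le_of_eq ?_)
      rw [sub_zero, mul_pow]
      ring


lemma pascal_sum {Z : Type*} [AddCommMonoid Z] [Module ℂ Z] (k : ℕ) (D : ℕ → Z) :
    ∑ i ∈ Finset.range (k + 2), (((k + 1).choose i : ℕ) : ℂ) • D i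
      = ∑ j ∈ Finset.range (k + 1), ((k.choose j : ℕ) : ℂ) • D j
        + ∑ j ∈ Finset.range (k + 1), ((k.choose j : ℕ) : ℂ) • D (j + 1) := by
  rw [Finset.sum_range_succ']
  have h1 : ∀ i, (((k + 1).choose (i + 1) : ℕ) : ℂ) • D (i + 1)
      = ((k.choose i : ℕ) : ℂ) • D (i + 1) + ((k.choose (i + 1) : ℕ) : ℂ) • D (i + 1) := by
    intro i
    rw [Nat.choose_succ_succ]
    push_cast
    rw [add_smul]
  rw [Finset.sum_congr rfl fun i _ => h1 i, Finset.sum_add_distrib]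
  have h2 : ∑ i ∈ Finset.range (k + 1), ((k.choose (i + 1) : ℕ) : ℂ) • D (i + 1)
      + (((k + 1).choose 0 : ℕ) : ℂ) • D 0
      = ∑ j ∈ Finset.range (k + 1), ((k.choose j : ℕ) : ℂ) • D j := by
    have h3 : (((k + 1).choose 0 : ℕ) : ℂ) • D 0 = ((k.choose 0 : ℕ) : ℂ) • D 0 := by
      simp
    rw [h3, ← Finset.sum_range_succ' (fun i => ((k.choose i : ℕ) : ℂ) • D i) (k + 1),
      Finset.sum_range_succ, Nat.choose_succ_self, Nat.cast_zero, zero_smul, add_zero]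
  conv_rhs => rw [← h2]
  abel

lemma Gop_comm (hVj : Continuous fun q : ℝ × X => V q.1 q.2) (B : X →L[ℂ] X)
    (hBC : ∀ x : X, B (C x) = C (B x))
    (hcomm0 : ∀ (s : ℝ) (w : X), B (V s w) = V s (B w) + Gop V C 1 s w)
    (n : ℕ) (s : ℝ) (w : X) :
    B (Gop V C n s w) = Gop V C n s (B w) + Gop V C (n + 1) s w := by
  induction n using Nat.strong_induction_on generalizing s w with
  | _ n ih =>
    obtain _ | k := n
    · simpa only [Gop_zero] using hcomm0 s w
    · have point : ∀ r : ℝ,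
          B (∑ j ∈ Finset.range (k + 1), ((k.choose j : ℕ) : ℂ) •
              Gop V C j (s - r) (C (Gop V C (k - j) r w)))
          = (∑ j ∈ Finset.range (k + 1), ((k.choose j : ℕ) : ℂ) •
              Gop V C j (s - r) (C (Gop V C (k - j) r (B w))))
            + ∑ i ∈ Finset.range (k + 2), (((k + 1).choose i : ℕ) : ℂ) •
              Gop V C i (s - r) (C (Gop V C (k + 1 - i) r w)) := by
        intro r
        rw [map_sum]
        have step : ∀ j ∈ Finset.range (k + 1),
            B (((k.choose j : ℕ) : ℂ) • Gop V C j (s - r) (C (Gop V C (k - j) r w)))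
            = ((k.choose j : ℕ) : ℂ) • Gop V C j (s - r) (C (Gop V C (k - j) r (B w)))
              + (((k.choose j : ℕ) : ℂ) •
                  Gop V C j (s - r) (C (Gop V C (k + 1 - j) r w))
                + ((k.choose j : ℕ) : ℂ) •
                  Gop V C (j + 1) (s - r) (C (Gop V C (k + 1 - (j + 1)) r w))) := by
          intro j hj
          have hjk := Nat.lt_succ_iff.mp (Finset.mem_range.mp hj)
          have i1 : k + 1 - j = (k - j) + 1 := by omega
          have i2 : k + 1 - (j + 1) = k - j := by omega
          rw [_root_.map_smul, ih j (Nat.lt_succ_of_le hjk) (s - r) _, hBC,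
            ih (k - j) (Nat.lt_succ_of_le (Nat.sub_le _ _)) r w, map_add,
            Gop_add V C hVj j (s - r) _ _, i1, i2, smul_add, smul_add]
          abel
        rw [Finset.sum_congr rfl step, Finset.sum_add_distrib,
          Finset.sum_add_distrib,
          ← pascal_sum k (fun i => Gop V C i (s - r) (C (Gop V C (k + 1 - i) r w)))]
      have hi1 := Gintegrable V C hVj k s w
      have hi2 := Gintegrable V C hVj k s (B w)
      have hi3 := Gintegrable V C hVj (k + 1) s w
      rw [Gop_succ, _root_.map_smul, ← B.intervalIntegral_comp_comm hi1,
        intervalIntegral.integral_congr (g := fun r =>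
          (∑ j ∈ Finset.range (k + 1), ((k.choose j : ℕ) : ℂ) •
              Gop V C j (s - r) (C (Gop V C (k - j) r (B w))))
            + ∑ i ∈ Finset.range (k + 2), (((k + 1).choose i : ℕ) : ℂ) •
              Gop V C i (s - r) (C (Gop V C (k + 1 - i) r w))) (fun r _ => point r),
        intervalIntegral.integral_add hi2 hi3, smul_add, ← Gop_succ, ← Gop_succ]

lemma Gop_pow (hVj : Continuous fun q : ℝ × X => V q.1 q.2) (B : X →L[ℂ] X)
    (hBC : ∀ x : X, B (C x) = C (B x))
    (hcomm0 : ∀ (s : ℝ) (w : X), B (V s w) = V s (B w) + Gop V C 1 s w)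
    {w : X} (hBw : B w = 0) (t : ℝ) (n : ℕ) :
    (B ^ n) (V t w) = Gop V C n t w := by
  induction n with
  | zero => rw [pow_zero, ContinuousLinearMap.one_apply, Gop_zero]
  | succ n ihn =>
    rw [pow_succ', ContinuousLinearMap.mul_apply, ihn,
      Gop_comm V C hVj B hBC hcomm0 n t w]
    have : Gop V C n t (B w) = 0 := by rw [hBw]; exact Gop_zero_vec V C hVj n t
    rw [this, zero_add]


lemma hasDerivAt_V_comp (hVj : Continuous fun q : ℝ × X => V q.1 q.2)
    {h : ℝ → X} {d e : X} {s₀ T : ℝ}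
    (hh : HasDerivAt h d s₀)
    (he : HasDerivAt (fun a => V a (h s₀)) e (T - s₀)) :
    HasDerivAt (fun s => V (T - s) (h s)) (V (T - s₀) d - e) s₀ := by
  have h2 : HasDerivAt (fun s : ℝ => V (T - s) (h s₀)) (-e) s₀ := by
    have hf : HasDerivAt (fun s : ℝ => T - s) (-1 : ℝ) s₀ := by
      simpa using (hasDerivAt_id s₀).const_sub T
    have := he.scomp s₀ hf
    simpa [Function.comp_def] using this
  have h1 : HasDerivAt (fun s : ℝ => V (T - s) (h s - h s₀)) (V (T - s₀) d) s₀ := by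
    rw [hasDerivAt_iff_tendsto_slope]
    have hs : Filter.Tendsto (slope h s₀) (nhdsWithin s₀ {s₀}ᶜ) (nhds d) :=
      hasDerivAt_iff_tendsto_slope.mp hh
    have hfst : Filter.Tendsto (fun s : ℝ => T - s) (nhdsWithin s₀ {s₀}ᶜ)
        (nhds (T - s₀)) :=
      ((continuous_const.sub continuous_id).tendsto s₀).mono_left nhdsWithin_le_nhds
    have hcomp := (hVj.tendsto (T - s₀, d)).comp (hfst.prodMk_nhds hs)
    refine hcomp.congr fun s => ?_
    show V (T - s) (slope h s₀ s) = slope (fun s => V (T - s) (h s - h s₀)) s₀ s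
    rw [slope_def_module, slope_def_module, sub_self, map_zero, sub_zero,
      ContinuousLinearMap.map_smul_of_tower]
  have hsum := h1.add h2
  have heq : (fun s => V (T - s) (h s - h s₀) + V (T - s) (h s₀))
      = fun s => V (T - s) (h s) := funext fun s => by rw [map_sub]; abel
  rw [sub_eq_add_neg]
  exact heq ▸ hsum

end Abstract

/-- **Key step in the proof of finite propagation speed** (McIntosh–Morris, proof of
Theorem 3.1): if `η ≡ 1` on `K`, `u` is supported in `K` and `c|t|‖C_η‖ < 1`, then
`e^{itD}u` vanishes a.e. outside the support of `η`. -/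
theorem group_vanishes_outside_support
    {M : Type*} [MetricSpace M] [MeasurableSpace M] [BorelSpace M]
    (μ : Measure M) [SigmaFinite μ]
    (m : ℕ) (hm : 1 ≤ m) (p : ENNReal) [hp1 : Fact (1 ≤ p)] (hp2 : p ≠ ⊤)
    (Dom : Submodule ℂ (Lp (EuclideanSpace ℂ (Fin m)) p μ))
    (hdense : Dense (Dom : Set (Lp (EuclideanSpace ℂ (Fin m)) p μ)))
    (D : Lp (EuclideanSpace ℂ (Fin m)) p μ → Lp (EuclideanSpace ℂ (Fin m)) p μ)
    (hDadd : ∀ u ∈ Dom, ∀ v ∈ Dom, D (u + v) = D u + D v)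
    (hDsmul : ∀ (a : ℂ), ∀ u ∈ Dom, D (a • u) = a • D u)
    (V : ℝ → Lp (EuclideanSpace ℂ (Fin m)) p μ →L[ℂ]
      Lp (EuclideanSpace ℂ (Fin m)) p μ)
    (c ω : ℝ) (hc : 1 ≤ c) (hω : 0 ≤ ω)
    (hV0 : V 0 = ContinuousLinearMap.id ℂ _)
    (hVgrp : ∀ s t : ℝ, V (s + t) = (V s).comp (V t))
    (hVcont : ∀ u, Continuous fun t => V t u)
    (hVdom : ∀ t : ℝ, ∀ u ∈ Dom, V t u ∈ Dom)
    (hVderiv : ∀ t : ℝ, ∀ u ∈ Dom,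
      HasDerivAt (fun s => V s u) (Complex.I • V t (D u)) t)
    (hVD : ∀ t : ℝ, ∀ u ∈ Dom, V t (D u) = D (V t u))
    (hVbound : ∀ t : ℝ, ‖V t‖ ≤ c * Real.exp (ω * |t|))
    (K : Set M)
    (u : Lp (EuclideanSpace ℂ (Fin m)) p μ)
    (hu : ∀ᵐ x ∂μ, x ∉ K → (u : M → EuclideanSpace ℂ (Fin m)) x = 0)
    (t : ℝ)
    (η : M → ℝ) (L : NNReal) (hηLip : LipschitzWith L η) (hηbdd : ∃ C, ∀ x, |η x| ≤ C)
    (hηK : ∀ x ∈ K, η x = 1)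
    (Mη : Lp (EuclideanSpace ℂ (Fin m)) p μ →L[ℂ] Lp (EuclideanSpace ℂ (Fin m)) p μ)
    (hMη : ∀ w, (Mη w : M → EuclideanSpace ℂ (Fin m))
      =ᵐ[μ] fun x => (η x : ℂ) • (w : M → EuclideanSpace ℂ (Fin m)) x)
    (hMηdom : ∀ w ∈ Dom, Mη w ∈ Dom)
    (Cη : Lp (EuclideanSpace ℂ (Fin m)) p μ →L[ℂ] Lp (EuclideanSpace ℂ (Fin m)) p μ)
    (hCη : ∀ w ∈ Dom, Cη w = Mη (D w) - D (Mη w))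
    (hCηMη : ∀ w, Mη (Cη w) = Cη (Mη w))
    (hsmall : c * |t| * ‖Cη‖ < 1) :
    ∀ᵐ x ∂μ, x ∉ closure (Function.support η) →
      (V t u : M → EuclideanSpace ℂ (Fin m)) x = 0 := by
  classical
  have hVj : Continuous fun q : ℝ × (Lp (EuclideanSpace ℂ (Fin m)) p μ) => V q.1 q.2 :=
    Vjoint V c ω hVcont hVbound
  set B : Lp (EuclideanSpace ℂ (Fin m)) p μ →L[ℂ] Lp (EuclideanSpace ℂ (Fin m)) p μ :=
    ContinuousLinearMap.id ℂ _ - Mη with hB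
  have hBapp : ∀ w, B w = w - Mη w := fun w => rfl
  have hBC : ∀ x, B (Cη x) = Cη (B x) := by
    intro x
    rw [hBapp, hBapp, map_sub, hCηMη]
  -- the basic commutator identity on the domain, via differentiation
  have hDomComm : ∀ (T : ℝ), ∀ w ∈ Dom,
      Mη (V T w) - V T (Mη w) = ∫ s in (0:ℝ)..T, Complex.I • V (T - s) (Cη (V s w)) := by
    intro T w hw
    have hderiv : ∀ s : ℝ, HasDerivAt (fun s' => V (T - s') (Mη (V s' w)))
        (Complex.I • V (T - s) (Cη (V s w))) s := by
      intro s
      have hVsw : V s w ∈ Dom := hVdom s w hw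
      have hMVsw : Mη (V s w) ∈ Dom := hMηdom _ hVsw
      have hh : HasDerivAt (fun s' => Mη (V s' w)) (Mη (Complex.I • V s (D w))) s := by
        have := HasFDerivAt.comp_hasDerivAt s
          ((Mη.restrictScalars ℝ).hasFDerivAt (x := V s w)) (hVderiv s w hw)
        simpa [Function.comp_def, ContinuousLinearMap.coe_restrictScalars'] using this
      have he := hVderiv (T - s) (Mη (V s w)) hMVsw
      have hmain := hasDerivAt_V_comp V hVj hh he
      refine hmain.congr_deriv ?_
      rw [hCη _ hVsw, map_sub, smul_sub, hVD s w hw, _root_.map_smul Mη,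
        ContinuousLinearMap.map_smul]
    have hcont : Continuous fun s : ℝ => Complex.I • V (T - s) (Cη (V s w)) := by
      refine Continuous.const_smul ?_ Complex.I
      exact hVj.comp ((continuous_const.sub continuous_id).prodMk
        (Cη.continuous.comp (hVj.comp (continuous_id.prodMk continuous_const))))
    have hFTC := intervalIntegral.integral_eq_sub_of_hasDerivAt
      (f := fun s' => V (T - s') (Mη (V s' w)))
      (fun s _ => hderiv s) (hcont.intervalIntegrable 0 T)
    rw [hFTC]
    beta_reduce
    rw [sub_self, sub_zero, hV0]
    simp only [ContinuousLinearMap.id_apply]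
  -- extend the commutator identity to the whole space by density
  have hcomm0 : ∀ (T : ℝ) (w : Lp (EuclideanSpace ℂ (Fin m)) p μ),
      B (V T w) = V T (B w) + Gop V Cη 1 T w := by
    intro T
    have hfun : (fun w : Lp (EuclideanSpace ℂ (Fin m)) p μ => B (V T w) - V T (B w))
        = fun w => Gop V Cη 1 T w := by
      refine Continuous.ext_on hdense ?_ ?_ ?_
      · exact (B.continuous.comp (V T).continuous).sub ((V T).continuous.comp B.continuous)
      · exact Gcont2 V Cη hVj 1 continuous_const continuous_id
      · intro w hw
        have key := hDomComm T w hw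
        have h2 : B (V T w) - V T (B w) = -(Mη (V T w) - V T (Mη w)) := by
          rw [hBapp, hBapp, map_sub]
          abel
        show B (V T w) - V T (B w) = Gop V Cη 1 T w
        rw [h2, key, ← intervalIntegral.integral_neg, Gop_succ]
        simp only [zero_add, Finset.sum_range_one, Nat.choose_self, Nat.cast_one, one_smul, Gop_zero,
          Nat.sub_zero]
        rw [← intervalIntegral.integral_smul]
        refine intervalIntegral.integral_congr fun s _ => ?_
        simp [Finset.sum_range_succ, Gop_zero]
    intro w
    have h3 := congrFun hfun w
    exact sub_eq_iff_eq_add'.mp h3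
  -- `Mη u = u` since `u` is supported in `K` and `η ≡ 1` there
  have hMu : Mη u = u := by
    refine Lp.ext ?_
    filter_upwards [hMη u, hu] with x h1 h2
    rw [h1]
    by_cases hx : x ∈ K
    · rw [hηK x hx]
      norm_num
    · rw [h2 hx, smul_zero]
  have hBu : B u = 0 := by rw [hBapp, hMu, sub_self]
  have hpow : ∀ n, (B ^ n) (V t u) = Gop V Cη n t u :=
    fun n => Gop_pow V Cη hVj B hBC hcomm0 hBu t n
  have hc0 : (0:ℝ) ≤ c := le_trans zero_le_one hc
  have hnorm : ∀ n, ‖(B ^ n) (V t u)‖ ≤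
      (c * Real.exp (ω * |t|) * ‖u‖) * (c * (‖Cη‖ * |t|)) ^ n := by
    intro n
    rw [hpow n]
    refine (Gop_norm_le V Cη hVj hc0 hVbound n t u).trans (le_of_eq ?_)
    rw [mul_pow, mul_pow, pow_succ]
    ring
  have hq0 : (0:ℝ) ≤ c * (‖Cη‖ * |t|) := by positivity
  have hq1 : c * (‖Cη‖ * |t|) < 1 := by
    calc c * (‖Cη‖ * |t|) = c * |t| * ‖Cη‖ := by ring
      _ < 1 := hsmall
  have htend : Filter.Tendsto (fun n => (B ^ n) (V t u)) Filter.atTop (nhds 0) := by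
    apply squeeze_zero_norm hnorm
    have := (tendsto_pow_atTop_nhds_zero_of_lt_one hq0 hq1).const_mul
      (c * Real.exp (ω * |t|) * ‖u‖)
    simpa using this
  have hmeas := tendstoInMeasure_of_tendsto_Lp (μ := μ) htend
  obtain ⟨ns, hns, hae⟩ := hmeas.exists_seq_tendsto_ae
  -- pointwise description of `B^n`
  have hstep : ∀ n : ℕ, ((B ^ (n+1)) (V t u) : M → EuclideanSpace ℂ (Fin m))
      =ᵐ[μ] fun x => (1 - (η x : ℂ)) •
        ((B ^ n) (V t u) : M → EuclideanSpace ℂ (Fin m)) x := by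
    intro n
    have h1 : (B ^ (n+1)) (V t u) = (B ^ n) (V t u) - Mη ((B ^ n) (V t u)) := by
      rw [pow_succ', ContinuousLinearMap.mul_apply, hBapp]
    rw [h1]
    filter_upwards [Lp.coeFn_sub ((B ^ n) (V t u)) (Mη ((B ^ n) (V t u))),
      hMη ((B ^ n) (V t u))] with x hx1 hx2
    rw [hx1, Pi.sub_apply, hx2, sub_smul, one_smul]
  have hall : ∀ᵐ x ∂μ, ∀ n : ℕ,
      ((B ^ (n+1)) (V t u) : M → EuclideanSpace ℂ (Fin m)) x
        = (1 - (η x : ℂ)) • ((B ^ n) (V t u) : M → EuclideanSpace ℂ (Fin m)) x :=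
    ae_all_iff.mpr hstep
  filter_upwards [hall, hae, Lp.coeFn_zero (EuclideanSpace ℂ (Fin m)) p μ] with x hx hxt hx0
  intro hxnot
  have hηx : η x = 0 := by
    by_contra hne
    exact hxnot (subset_closure (Function.mem_support.mpr hne))
  have hform : ∀ n, ((B ^ n) (V t u) : M → EuclideanSpace ℂ (Fin m)) x
      = (V t u : M → EuclideanSpace ℂ (Fin m)) x := by
    intro n
    induction n with
    | zero =>
      have h0 : (B ^ 0) (V t u) = V t u := by
        rw [pow_zero, ContinuousLinearMap.one_apply]
      rw [h0]
    | succ n ihn =>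
      rw [hx n, ihn, hηx]
      norm_num
  rw [hx0] at hxt
  have hconst : Filter.Tendsto (fun _ : ℕ => (V t u : M → EuclideanSpace ℂ (Fin m)) x)
      Filter.atTop (nhds (0 : EuclideanSpace ℂ (Fin m))) :=
    hxt.congr fun i => hform (ns i)
  exact tendsto_nhds_unique tendsto_const_nhds hconst
end

section
/- Let (M,d) be a metric space with a σ-finite Borel measure μ, let m ≥ 1, and write H = L²(μ;ℂ^m). Let D : Dom(D) ⊆ H → H be a densely defined linear operator, and suppose there is κ > 0 such that for every bounded Lipschitz function η : M → ℝ and every u ∈ Dom(D): η·u ∈ Dom(D), ‖η·(Du) − D(η·u)‖ ≤ κ·Lip(η)·‖u‖, and η²·(Du) − 2η·D(η·u) + D(η²·u) = 0. Let B ∈ L^∞(M; ℂ^{m×m}) define a multiplication operator on H that is self-adjoint and satisfies ⟨Bu,u⟩ ≥ λ‖u‖² for all u ∈ H, for some λ > 0, and write ‖u‖_B := ⟨B⁻¹u,u⟩^{1/2}. Let V : ℝ → B(H) be a C₀ group generated by iBD (with Dom(BD) = Dom(D)) satisfying ‖V(t)u‖_B ≤ ‖u‖_B for all t ∈ ℝ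 and u ∈ H. Then V has finite propagation speed at most κ‖B‖_∞: for every closed set K ⊆ M, every u ∈ H vanishing μ-a.e. outside K, and every t ∈ ℝ, V(t)u vanishes μ-a.e. on {x ∈ M : dist(x,K) > κ‖B‖_∞|t|}. -/
open MeasureTheory Complex Filter
set_option linter.unusedVariables false
set_option linter.unusedSectionVars false
set_option maxHeartbeats 1000000



private lemma exp_sub_exp_le' (a b : ℝ) (h : b ≤ a) :
    Real.exp a - Real.exp b ≤ Real.exp a * (a - b) := by
  have h1 : Real.exp b = Real.exp a * Real.exp (b - a) := by
    rw [← Real.exp_add]; ring_nf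
  have h2 : (b - a) + 1 ≤ Real.exp (b - a) := Real.add_one_le_exp _
  nlinarith [Real.exp_pos a]

lemma exp_sub_exp_abs_le (a b : ℝ) (c : ℝ) (ha : a ≤ c) (hb : b ≤ c) :
    |Real.exp a - Real.exp b| ≤ Real.exp c * |a - b| := by
  rcases le_total b a with h | h
  · have := exp_sub_exp_le' a b h
    rw [_root_.abs_of_nonneg (sub_nonneg.2 (Real.exp_le_exp.2 h)), _root_.abs_of_nonneg (sub_nonneg.2 h)]
    calc Real.exp a - Real.exp b ≤ Real.exp a * (a - b) := this
    _ ≤ Real.exp c * (a - b) := by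
        have := Real.exp_le_exp.2 ha
        nlinarith [sub_nonneg.2 h, Real.exp_pos a]
  · have := exp_sub_exp_le' b a h
    rw [abs_sub_comm, abs_sub_comm a b,
      _root_.abs_of_nonneg (sub_nonneg.2 (Real.exp_le_exp.2 h)), _root_.abs_of_nonneg (sub_nonneg.2 h)]
    calc Real.exp b - Real.exp a ≤ Real.exp b * (b - a) := this
    _ ≤ Real.exp c * (b - a) := by
        have := Real.exp_le_exp.2 hb
        nlinarith [sub_nonneg.2 h, Real.exp_pos b]

lemma gronwall_abs {G G' : ℝ → ℝ} (hG : ∀ τ, HasDerivAt G (G' τ) τ)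
    {a : ℝ} (ha : 0 ≤ a) (hb : ∀ τ, |G' τ| ≤ a * G τ) (t : ℝ) :
    G t ≤ Real.exp (a * |t|) * G 0 := by
  rcases le_or_gt 0 t with ht | ht
  · have key : ∀ τ : ℝ, HasDerivAt (fun σ => G σ * Real.exp (-a * σ))
        (G' τ * Real.exp (-a * τ) + G τ * (Real.exp (-a * τ) * (-a * 1))) τ := fun τ =>
      (hG τ).mul (((hasDerivAt_id τ).const_mul (-a)).exp)
    have anti : Antitone (fun σ => G σ * Real.exp (-a * σ)) := by
      refine antitone_of_deriv_nonpos (fun τ => (key τ).differentiableAt) (fun τ => ?_)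
      rw [(key τ).deriv]
      have h1 := abs_le.1 (hb τ)
      nlinarith [Real.exp_pos (-a * τ)]
    have h2 := anti ht
    simp only [mul_zero, neg_zero, zero_mul, Real.exp_zero, mul_one] at h2
    have h3 : Real.exp (-a * t) > 0 := Real.exp_pos _
    rw [_root_.abs_of_nonneg ht]
    have h4 : Real.exp (a * t) * Real.exp (-a * t) = 1 := by
      rw [← Real.exp_add]; ring_nf; exact Real.exp_zero
    have h5 := mul_le_mul_of_nonneg_right h2 (Real.exp_pos (a * t)).le
    have h6 : G t * Real.exp (-a * t) * Real.exp (a * t) = G t := by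
      rw [mul_assoc, mul_comm (Real.exp (-a * t)), h4, mul_one]
    nlinarith [h5, h6]
  · have key : ∀ τ : ℝ, HasDerivAt (fun σ => G σ * Real.exp (a * σ))
        (G' τ * Real.exp (a * τ) + G τ * (Real.exp (a * τ) * (a * 1))) τ := fun τ =>
      (hG τ).mul (((hasDerivAt_id τ).const_mul a).exp)
    have mono : Monotone (fun σ => G σ * Real.exp (a * σ)) := by
      refine monotone_of_deriv_nonneg (fun τ => (key τ).differentiableAt) (fun τ => ?_)
      rw [(key τ).deriv]
      have h1 := abs_le.1 (hb τ)
      nlinarith [Real.exp_pos (a * τ)]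
    have h2 := mono ht.le
    simp only [mul_zero, Real.exp_zero, mul_one] at h2
    rw [_root_.abs_of_neg ht]
    have h4 : Real.exp (a * -t) * Real.exp (a * t) = 1 := by
      rw [← Real.exp_add]; ring_nf; exact Real.exp_zero
    have h5 := mul_le_mul_of_nonneg_right h2 (Real.exp_pos (a * -t)).le
    have h6 : G t * Real.exp (a * t) * Real.exp (a * -t) = G t := by
      rw [mul_assoc, mul_comm (Real.exp (a * t)), h4, mul_one]
    nlinarith [h5, h6]


section posop
variable {E : Type*} [NormedAddCommGroup E] [InnerProductSpace ℂ E]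

local notation "⟪" x ", " y "⟫" => inner (𝕜 := ℂ) x y

lemma pos_op_cauchy_schwarz (T : E →L[ℂ] E)
    (hsym : ∀ x y : E, ⟪T x, y⟫ = ⟪x, T y⟫)
    (hpos : ∀ x : E, 0 ≤ (⟪T x, x⟫).re) (x y : E) :
    Complex.normSq ⟪T x, y⟫ ≤ (⟪T x, x⟫).re * (⟪T y, y⟫).re := by
  set z0 : ℂ := ⟪T x, y⟫ with hz0
  set A : ℝ := (⟪T x, x⟫).re with hA
  set C : ℝ := (⟪T y, y⟫).re with hCdef
  set β : ℝ := Complex.normSq z0 with hβdef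
  by_cases hz : z0 = 0
  · rw [hβdef, hz]; simpa using mul_nonneg (hpos x) (hpos y)
  have hβ : 0 < β := by
    rw [hβdef]; exact Complex.normSq_pos.2 hz
  have hexp : ∀ c : ℂ, ⟪T (x + c • y), x + c • y⟫
      = ⟪T x, x⟫ + c * z0 + (starRingEnd ℂ) (c * z0)
        + ((Complex.normSq c : ℝ) : ℂ) * ⟪T y, y⟫ := by
    intro c
    have hTy : ⟪T y, x⟫ = (starRingEnd ℂ) z0 := by
      rw [hz0, hsym y x, ← inner_conj_symm]
    rw [map_add, ContinuousLinearMap.map_smul, inner_add_left, inner_add_right,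
      inner_add_right, inner_smul_left, inner_smul_right, inner_smul_left,
      inner_smul_right, hTy, ← hz0]
    have : ((Complex.normSq c : ℝ) : ℂ) = (starRingEnd ℂ) c * c := by
      rw [mul_comm, Complex.mul_conj]
    rw [this, map_mul]
    ring
  have key : ∀ t : ℝ, 0 ≤ A + 2 * t * β + t ^ 2 * β * C := by
    intro t
    set c : ℂ := (t : ℂ) * (starRingEnd ℂ) z0 with hc
    have h0 := hpos (x + c • y)
    rw [hexp c] at h0
    have hcz : c * z0 = ((t * β : ℝ) : ℂ) := by
      rw [hc, mul_assoc, mul_comm ((starRingEnd ℂ) z0) z0, Complex.mul_conj, hβdef]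
      push_cast; ring
    have hnc : Complex.normSq c = t ^ 2 * β := by
      rw [hc, Complex.normSq_mul, Complex.normSq_ofReal, Complex.normSq_conj, hβdef]; ring
    rw [hcz, hnc] at h0
    simp only [Complex.add_re, Complex.conj_re, Complex.ofReal_re,
      Complex.re_ofReal_mul] at h0
    rw [← hA, ← hCdef] at h0
    nlinarith [h0]
  rcases (hpos y).eq_or_lt with hC0 | hC0
  · exfalso
    have h1 := key (-(A + 1) / (2 * β))
    rw [← hCdef] at hC0
    rw [← hC0] at h1
    have ht : 2 * (-(A + 1) / (2 * β)) * β = -(A + 1) := by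
      field_simp
    nlinarith [h1, ht]
  · rw [← hCdef] at hC0
    have h1 := key (-1 / C)
    have h2 : A + 2 * (-1 / C) * β + (-1 / C) ^ 2 * β * C = A - β / C := by
      field_simp; ring
    rw [h2] at h1
    have h3 : β / C ≤ A := by linarith
    calc β = β / C * C := by field_simp
    _ ≤ A * C := by nlinarith [hC0]

lemma pos_op_norm_sq_le (T : E →L[ℂ] E)
    (hsym : ∀ x y : E, ⟪T x, y⟫ = ⟪x, T y⟫)
    (hpos : ∀ x : E, 0 ≤ (⟪T x, x⟫).re)
    {CB : ℝ} (hCB : 0 ≤ CB) (hnorm : ∀ w, ‖T w‖ ≤ CB * ‖w‖) (z : E) :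
    ‖T z‖ ^ 2 ≤ CB * (⟪T z, z⟫).re := by
  by_cases h0 : ‖T z‖ = 0
  · rw [h0]
    simpa using mul_nonneg hCB (hpos z)
  have h1 : Complex.normSq ⟪T z, T z⟫ ≤ (⟪T z, z⟫).re * (⟪T (T z), T z⟫).re :=
    pos_op_cauchy_schwarz T hsym hpos z (T z)
  have h2 : Complex.normSq ⟪T z, T z⟫ = ‖T z‖ ^ 4 := by
    have him : (⟪T z, T z⟫).im = 0 := by
      rw [← RCLike.im_to_complex]
      exact inner_self_im (𝕜 := ℂ) (T z)
    have hre : (⟪T z, T z⟫).re = ‖T z‖ ^ 2 := by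
      simpa using inner_self_eq_norm_sq (𝕜 := ℂ) (T z)
    rw [Complex.normSq_apply, him, hre]
    ring
  have h3 : (⟪T (T z), T z⟫).re ≤ CB * ‖T z‖ ^ 2 := by
    calc (⟪T (T z), T z⟫).re ≤ ‖T (T z)‖ * ‖T z‖ := by
          simpa using re_inner_le_norm (𝕜 := ℂ) (T (T z)) (T z)
    _ ≤ CB * ‖T z‖ * ‖T z‖ := by
        have := hnorm (T z)
        nlinarith [norm_nonneg (T z)]
    _ = CB * ‖T z‖ ^ 2 := by ring
  have h4 : 0 ≤ (⟪T z, z⟫).re := hpos z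
  have h5 : 0 < ‖T z‖ := lt_of_le_of_ne (norm_nonneg _) (Ne.symm h0)
  by_contra hcon
  push_neg at hcon
  have hm := mul_lt_mul_of_pos_right hcon (mul_pos h5 h5)
  nlinarith [h1, h2, mul_le_mul_of_nonneg_left h3 h4, hm]
end posop


section mulop
variable {M : Type*} [MeasurableSpace M] {μ : Measure M}
  {E : Type*} [NormedAddCommGroup E] [NormedSpace ℂ E]

lemma Lp_norm_le_of_ae_bound {w g : Lp E 2 μ} {c : ℝ} (hc : 0 ≤ c)
    (h : ∀ᵐ x ∂μ, ‖(w : M → E) x‖ ≤ c * ‖(g : M → E) x‖) : ‖w‖ ≤ c * ‖g‖ := by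
  rw [Lp.norm_def, Lp.norm_def]
  have h1 := eLpNorm_le_mul_eLpNorm_of_ae_le_mul h 2
  calc (eLpNorm (w : M → E) 2 μ).toReal
      ≤ (ENNReal.ofReal c * eLpNorm (g : M → E) 2 μ).toReal := by
        apply ENNReal.toReal_mono _ h1
        exact ENNReal.mul_ne_top ENNReal.ofReal_ne_top (Lp.eLpNorm_ne_top g)
  _ = c * (eLpNorm (g : M → E) 2 μ).toReal := by
      rw [ENNReal.toReal_mul, ENNReal.toReal_ofReal hc]

lemma clm_ext_ae {A B : Lp E 2 μ →L[ℂ] Lp E 2 μ}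
    (h : ∀ u, (A u : M → E) =ᵐ[μ] (B u : M → E)) : A = B :=
  ContinuousLinearMap.ext fun u => Lp.ext (h u)

lemma exists_mulOp (η : M → ℝ) (hmeas : Measurable η) {C : ℝ} (hC0 : 0 ≤ C)
    (hC : ∀ x, |η x| ≤ C) :
    ∃ A : Lp E 2 μ →L[ℂ] Lp E 2 μ,
      (∀ u : Lp E 2 μ, (A u : M → E) =ᵐ[μ] fun x => (η x : ℂ) • (u : M → E) x) ∧
      ∀ u, ‖A u‖ ≤ C * ‖u‖ := by
  have hsm : ∀ u : Lp E 2 μ, AEStronglyMeasurable (fun x => (η x : ℂ) • (u : M → E) x) μ :=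
    fun u => ((Complex.measurable_ofReal.comp hmeas).aemeasurable.aestronglyMeasurable).smul
      (Lp.aestronglyMeasurable u)
  have hbd : ∀ u : Lp E 2 μ, ∀ᵐ x ∂μ, ‖(η x : ℂ) • (u : M → E) x‖ ≤ C * ‖(u : M → E) x‖ := by
    intro u
    filter_upwards with x
    rw [norm_smul, Complex.norm_real]
    exact mul_le_mul_of_nonneg_right (hC x) (norm_nonneg _)
  have hmem : ∀ u : Lp E 2 μ, MemLp (fun x => (η x : ℂ) • (u : M → E) x) 2 μ :=
    fun u => (Lp.memLp u).of_le_mul (hsm u) (hbd u)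
  set A0 : Lp E 2 μ →ₗ[ℂ] Lp E 2 μ :=
    { toFun := fun u => (hmem u).toLp _
      map_add' := by
        intro u v
        apply Lp.ext
        filter_upwards [(hmem (u + v)).coeFn_toLp, (hmem u).coeFn_toLp, (hmem v).coeFn_toLp,
          Lp.coeFn_add u v, Lp.coeFn_add ((hmem u).toLp _) ((hmem v).toLp _)]
          with x h1 h2 h3 h4 h5
        rw [h1, h5, Pi.add_apply, h2, h3, h4, Pi.add_apply, smul_add]
      map_smul' := by
        intro a u
        apply Lp.ext
        filter_upwards [(hmem (a • u)).coeFn_toLp, (hmem u).coeFn_toLp,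
          Lp.coeFn_smul a u, Lp.coeFn_smul a ((hmem u).toLp _)] with x h1 h2 h3 h4
        simp only [RingHom.id_apply]
        rw [h1, h4, Pi.smul_apply, h2, h3, Pi.smul_apply, smul_comm]
      } with hA0
  have hA0norm : ∀ u, ‖A0 u‖ ≤ C * ‖u‖ := by
    intro u
    apply Lp_norm_le_of_ae_bound hC0
    have h1' : (A0 u : M → E) =ᵐ[μ] fun x => (η x : ℂ) • (u : M → E) x :=
      (hmem u).coeFn_toLp
    filter_upwards [h1', hbd u] with x h1 h2
    rw [h1]
    exact h2
  refine ⟨A0.mkContinuous C hA0norm, fun u => ?_, fun u => ?_⟩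
  · exact (hmem u).coeFn_toLp
  · exact hA0norm u
end mulop


lemma eq_of_sub_eq_sub_of_eq {G : Type*} [AddCommGroup G] {a b c d : G}
    (h1 : a - b = c - d) (h2 : c = d) : a = b := by
  have h3 : a - b = 0 := by rw [h1, h2, sub_self]
  have := sub_eq_zero.mp h3
  exact this

/-- **Finite propagation speed for perturbed operators `BD`** (McIntosh–Morris,
Case II of Section 4, improved bound): the group generated by `iBD` has
propagation speed at most `κ‖B‖_∞`. -/
theorem finite_propagation_speed_BD
    {M : Type*} [MetricSpace M] [MeasurableSpace M] [BorelSpace M]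
    (μ : Measure M) [SigmaFinite μ]
    (m : ℕ) (hm : 1 ≤ m)
    (Dom : Submodule ℂ (Lp (EuclideanSpace ℂ (Fin m)) 2 μ))
    (hdense : Dense (Dom : Set (Lp (EuclideanSpace ℂ (Fin m)) 2 μ)))
    (D : Lp (EuclideanSpace ℂ (Fin m)) 2 μ → Lp (EuclideanSpace ℂ (Fin m)) 2 μ)
    (hDadd : ∀ u ∈ Dom, ∀ v ∈ Dom, D (u + v) = D u + D v)
    (hDsmul : ∀ (a : ℂ), ∀ u ∈ Dom, D (a • u) = a • D u)
    (κ : ℝ) (hκ : 0 < κ)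
    (hcomm : ∀ (η : M → ℝ) (L : NNReal), LipschitzWith L η → (∃ C, ∀ x, |η x| ≤ C) →
      ∀ Mη : Lp (EuclideanSpace ℂ (Fin m)) 2 μ →L[ℂ] Lp (EuclideanSpace ℂ (Fin m)) 2 μ,
        (∀ u, (Mη u : M → EuclideanSpace ℂ (Fin m))
            =ᵐ[μ] fun x => (η x : ℂ) • (u : M → EuclideanSpace ℂ (Fin m)) x) →
        ∀ u ∈ Dom, Mη u ∈ Dom ∧
          ‖Mη (D u) - D (Mη u)‖ ≤ κ * L * ‖u‖ ∧
          Mη (Mη (D u)) - (2 : ℂ) • Mη (D (Mη u)) + D (Mη (Mη u)) = 0)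
    -- the multiplication operator `B`
    (b : M → Matrix (Fin m) (Fin m) ℂ)
    (Bop : Lp (EuclideanSpace ℂ (Fin m)) 2 μ →L[ℂ] Lp (EuclideanSpace ℂ (Fin m)) 2 μ)
    (hBop : ∀ u, (Bop u : M → EuclideanSpace ℂ (Fin m))
      =ᵐ[μ] fun x => Matrix.toEuclideanCLM (𝕜 := ℂ) (b x)
        ((u : M → EuclideanSpace ℂ (Fin m)) x))
    (hBsa : IsSelfAdjoint Bop)
    (lam : ℝ) (hlam : 0 < lam)
    (hBpos : ∀ u, lam * ‖u‖ ^ 2 ≤ (inner (𝕜 := ℂ) (Bop u) u).re)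
    (Binv : Lp (EuclideanSpace ℂ (Fin m)) 2 μ →L[ℂ] Lp (EuclideanSpace ℂ (Fin m)) 2 μ)
    (hBinv₁ : Binv.comp Bop = ContinuousLinearMap.id ℂ _)
    (hBinv₂ : Bop.comp Binv = ContinuousLinearMap.id ℂ _)
    -- `‖B‖_∞`: essential bound for the pointwise operator norms
    (CB : ℝ) (hCB : ∀ᵐ x ∂μ, ‖Matrix.toEuclideanCLM (𝕜 := ℂ) (b x)‖ ≤ CB)
    -- the `C₀` group generated by `iBD`
    (V : ℝ → Lp (EuclideanSpace ℂ (Fin m)) 2 μ →L[ℂ] Lp (EuclideanSpace ℂ (Fin m)) 2 μ)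
    (hV0 : V 0 = ContinuousLinearMap.id ℂ _)
    (hVgrp : ∀ s t : ℝ, V (s + t) = (V s).comp (V t))
    (hVcont : ∀ u, Continuous fun t => V t u)
    (hVdom : ∀ t : ℝ, ∀ u ∈ Dom, V t u ∈ Dom)
    (hVderiv : ∀ t : ℝ, ∀ u ∈ Dom,
      HasDerivAt (fun s => V s u) (Complex.I • V t (Bop (D u))) t)
    (hVBD : ∀ t : ℝ, ∀ u ∈ Dom, V t (Bop (D u)) = Bop (D (V t u)))
    -- contraction in the `B`-norm `‖u‖_B = ⟨B⁻¹u,u⟩^{1/2}`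
    (hVcontraction : ∀ (t : ℝ) u,
      (inner (𝕜 := ℂ) (Binv (V t u)) (V t u)).re ≤ (inner (𝕜 := ℂ) (Binv u) u).re)
    (K : Set M) (hK : IsClosed K)
    (u : Lp (EuclideanSpace ℂ (Fin m)) 2 μ)
    (hu : ∀ᵐ x ∂μ, x ∉ K → (u : M → EuclideanSpace ℂ (Fin m)) x = 0)
    (t : ℝ) :
    ∀ᵐ x ∂μ, κ * CB * |t| < Metric.infDist x K →
      (V t u : M → EuclideanSpace ℂ (Fin m)) x = 0 := by
  classical
  rcases lt_or_ge CB 0 with hCBneg | hCBnn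
  · have hF : ∀ᵐ x ∂μ, False := by
      filter_upwards [hCB] with x hx
      exact absurd (le_trans (norm_nonneg _) hx) (not_le.2 hCBneg)
    filter_upwards [hF] with x hx
    exact hx.elim
  rcases hCBnn.eq_or_lt with hCB0 | hCBpos
  · -- CB = 0 : the operator Bop is zero, hence the identity is zero and the space is trivial
    have hBop0 : ∀ w, Bop w = 0 := by
      intro w
      apply Lp.ext
      filter_upwards [hBop w, hCB, Lp.coeFn_zero (EuclideanSpace ℂ (Fin m)) 2 μ]
        with x h1 h2 h3
      rw [h1, h3]
      have hz : Matrix.toEuclideanCLM (𝕜 := ℂ) (b x) = 0 :=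
        norm_eq_zero.mp (le_antisymm (hCB0 ▸ h2) (norm_nonneg _))
      rw [hz]
      rfl
    have hall0 : ∀ w : Lp (EuclideanSpace ℂ (Fin m)) 2 μ, w = 0 := by
      intro w
      have h1 : Bop (Binv w) = w := ContinuousLinearMap.ext_iff.mp hBinv₂ w
      rw [hBop0 (Binv w)] at h1
      exact h1.symm
    rw [hall0 (V t u)]
    filter_upwards [Lp.coeFn_zero (EuclideanSpace ℂ (Fin m)) 2 μ] with x hx
    intro _
    exact hx
  -- main case : 0 < CB
  have main : ∀ R : ℝ, κ * CB * |t| < R →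
      ∀ᵐ x ∂μ, R ≤ Metric.infDist x K →
        (V t u : M → EuclideanSpace ℂ (Fin m)) x = 0 := by
    intro R hR
    have habs0 : 0 ≤ κ * CB * |t| := by positivity
    have hR0 : 0 < R := lt_of_le_of_lt habs0 hR
    -- basic operator facts
    have hBopBinv : ∀ w, Bop (Binv w) = w := fun w => ContinuousLinearMap.ext_iff.mp hBinv₂ w
    have hBinvBop : ∀ w, Binv (Bop w) = w := fun w => ContinuousLinearMap.ext_iff.mp hBinv₁ w
    have hV0app : ∀ w, V 0 w = w := fun w => by rw [hV0]; rfl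
    have hBsym : ∀ x y, (inner (𝕜 := ℂ) (Bop x) y) = inner (𝕜 := ℂ) x (Bop y) := by
      intro x y
      have h1 := ContinuousLinearMap.isSelfAdjoint_iff'.mp hBsa
      calc (inner (𝕜 := ℂ) (Bop x) y)
          = (inner (𝕜 := ℂ) ((ContinuousLinearMap.adjoint Bop) x) y) := by rw [h1]
      _ = inner (𝕜 := ℂ) x (Bop y) := ContinuousLinearMap.adjoint_inner_left Bop y x
    have hBinvsa : IsSelfAdjoint Binv := by
      have e1 : Binv * Bop = 1 := by
        rw [ContinuousLinearMap.mul_def, hBinv₁, ContinuousLinearMap.one_def]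
      have e2 : Bop * Binv = 1 := by
        rw [ContinuousLinearMap.mul_def, hBinv₂, ContinuousLinearMap.one_def]
      have e3 : star Binv * Bop = 1 := by
        have := congrArg star e2
        rw [star_mul, star_one] at this
        rwa [hBsa.star_eq] at this
      show star Binv = Binv
      calc star Binv = star Binv * 1 := (mul_one _).symm
      _ = star Binv * (Bop * Binv) := by rw [e2]
      _ = star Binv * Bop * Binv := (mul_assoc _ _ _).symm
      _ = 1 * Binv := by rw [e3]
      _ = Binv := one_mul _
    have hBinvsym : ∀ x y, (inner (𝕜 := ℂ) (Binv x) y) = inner (𝕜 := ℂ) x (Binv y) := by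
      intro x y
      have h1 := ContinuousLinearMap.isSelfAdjoint_iff'.mp hBinvsa
      calc (inner (𝕜 := ℂ) (Binv x) y)
          = (inner (𝕜 := ℂ) ((ContinuousLinearMap.adjoint Binv) x) y) := by rw [h1]
      _ = inner (𝕜 := ℂ) x (Binv y) := ContinuousLinearMap.adjoint_inner_left Binv y x
    have hBop_posre : ∀ w, 0 ≤ (inner (𝕜 := ℂ) (Bop w) w).re := fun w =>
      le_trans (mul_nonneg hlam.le (sq_nonneg _)) (hBpos w)
    have hBinv_posre : ∀ w, 0 ≤ (inner (𝕜 := ℂ) (Binv w) w).re := by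
      intro w
      have h1 := hBop_posre (Binv w)
      have h2 : (inner (𝕜 := ℂ) (Bop (Binv w)) (Binv w)).re
          = (inner (𝕜 := ℂ) (Binv w) w).re := by
        rw [hBsym, hBopBinv]
      linarith
    have hBopnorm : ∀ w, ‖Bop w‖ ≤ CB * ‖w‖ := by
      intro w
      apply Lp_norm_le_of_ae_bound hCBnn
      filter_upwards [hBop w, hCB] with x h1 h2
      rw [h1]
      calc ‖(Matrix.toEuclideanCLM (𝕜 := ℂ) (b x))
            ((w : M → EuclideanSpace ℂ (Fin m)) x)‖
          ≤ ‖Matrix.toEuclideanCLM (𝕜 := ℂ) (b x)‖ * ‖(w : M → EuclideanSpace ℂ (Fin m)) x‖ :=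
            ContinuousLinearMap.le_opNorm _ _
      _ ≤ CB * ‖(w : M → EuclideanSpace ℂ (Fin m)) x‖ :=
          mul_le_mul_of_nonneg_right h2 (norm_nonneg _)
    have hnormsq : ∀ w : Lp (EuclideanSpace ℂ (Fin m)) 2 μ,
        ‖w‖ ^ 2 ≤ CB * (inner (𝕜 := ℂ) (Binv w) w).re := by
      intro w
      have h := pos_op_norm_sq_le Bop hBsym hBop_posre hCBnn hBopnorm (Binv w)
      rw [hBopBinv w] at h
      rwa [← inner_conj_symm, Complex.conj_re] at h
    -- the fact Im ⟪D v, v⟫ = 0 on Dom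
    have hIm : ∀ v ∈ Dom, (inner (𝕜 := ℂ) (D v) v).im = 0 := by
      intro v hv
      have hconst : ∀ τ : ℝ, (inner (𝕜 := ℂ) (Binv (V τ v)) (V τ v)).re
          = (inner (𝕜 := ℂ) (Binv v) v).re := by
        intro τ
        refine le_antisymm (hVcontraction τ v) ?_
        have h2 := hVcontraction (-τ) (V τ v)
        have h3 : V (-τ) (V τ v) = v := by
          have h4 := hVgrp (-τ) τ
          have h5 : (-τ) + τ = 0 := by ring
          rw [h5, hV0] at h4
          calc V (-τ) (V τ v) = (V (-τ)).comp (V τ) v := rfl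
          _ = ContinuousLinearMap.id ℂ _ v := by rw [← h4]
          _ = v := rfl
        rw [h3] at h2
        exact h2
      have hFc : (fun τ : ℝ => (inner (𝕜 := ℂ) (Binv (V τ v)) (V τ v)).re)
          = fun _ => (inner (𝕜 := ℂ) (Binv v) v).re := funext hconst
      have h1 : HasDerivAt (fun σ => V σ v) (Complex.I • V 0 (Bop (D v))) 0 := hVderiv 0 v hv
      have h2 : HasDerivAt (fun σ => Binv (V σ v)) (Binv (Complex.I • V 0 (Bop (D v)))) 0 := by
        have := (Binv.restrictScalars ℝ).hasFDerivAt.comp_hasDerivAt 0 h1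
        exact this
      have h3 := HasDerivAt.inner (𝕜 := ℂ) h2 h1
      have h4 := Complex.reCLM.hasFDerivAt.comp_hasDerivAt 0 h3
      have h5 : HasDerivAt (fun τ : ℝ => (inner (𝕜 := ℂ) (Binv (V τ v)) (V τ v)).re)
          (Complex.reCLM (inner (𝕜 := ℂ) (Binv (V 0 v)) (Complex.I • V 0 (Bop (D v)))
            + inner (𝕜 := ℂ) (Binv (Complex.I • V 0 (Bop (D v)))) (V 0 v))) 0 := h4
      rw [hFc] at h5
      have h6 := (hasDerivAt_const (0 : ℝ) ((inner (𝕜 := ℂ) (Binv v) v).re)).unique h5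
      -- compute the derivative value
      have hval : (inner (𝕜 := ℂ) (Binv (V 0 v)) (Complex.I • V 0 (Bop (D v)))
            + inner (𝕜 := ℂ) (Binv (Complex.I • V 0 (Bop (D v)))) (V 0 v))
          = Complex.I * (starRingEnd ℂ) (inner (𝕜 := ℂ) (D v) v)
            - Complex.I * (inner (𝕜 := ℂ) (D v) v) := by
        rw [hV0app, hV0app, Binv.map_smul, hBinvBop, inner_smul_right, inner_smul_left]
        have e1 : (inner (𝕜 := ℂ) (Binv v) (Bop (D v))) = inner (𝕜 := ℂ) v (D v) := by
          rw [← hBsym, hBopBinv]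
        have e2 : (inner (𝕜 := ℂ) v (D v)) = (starRingEnd ℂ) (inner (𝕜 := ℂ) (D v) v) :=
          (inner_conj_symm _ _).symm
        rw [e1, e2, Complex.conj_I]
        ring
      rw [hval] at h6
      have h7gen : ∀ z : ℂ, (Complex.I * (starRingEnd ℂ) z - Complex.I * z).re = 2 * z.im := by
        intro z
        simp only [Complex.sub_re, Complex.mul_re, Complex.I_re, Complex.I_im,
          Complex.conj_re, Complex.conj_im]
        ring
      have h7 : (Complex.I * (starRingEnd ℂ) (inner (𝕜 := ℂ) (D v) v)
          - Complex.I * (inner (𝕜 := ℂ) (D v) v)).re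
          = 2 * (inner (𝕜 := ℂ) (D v) v).im := h7gen _
      have h8 : Complex.reCLM (Complex.I * (starRingEnd ℂ) (inner (𝕜 := ℂ) (D v) v)
          - Complex.I * (inner (𝕜 := ℂ) (D v) v)) = 2 * (inner (𝕜 := ℂ) (D v) v).im := h7
      rw [h8] at h6
      linarith [h6.symm]
    -- the weight family
    set ξ : M → ℝ := fun x => min (Metric.infDist x K) R with hξdef
    have hξmeas : Measurable ξ :=
      ((Metric.continuous_infDist_pt K).min continuous_const).measurable
    have hξ0 : ∀ x, 0 ≤ ξ x := fun x => le_min Metric.infDist_nonneg hR0.le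
    have hξR : ∀ x, ξ x ≤ R := fun x => min_le_right _ _
    have hξlip : LipschitzWith 1 ξ := (Metric.lipschitz_infDist_pt K).min_const R
    set θ : ℝ → M → ℝ := fun c x => Real.exp (c * ξ x) with hθdef
    have hθmeas : ∀ c, Measurable (θ c) := fun c =>
      (Real.measurable_exp.comp (hξmeas.const_mul c))
    have hθub : ∀ c x, c * ξ x ≤ max c 0 * R := by
      intro c x
      rcases le_or_gt 0 c with hc | hc
      · rw [max_eq_left hc]
        exact mul_le_mul_of_nonneg_left (hξR x) hc
      · rw [max_eq_right hc.le]
        rw [zero_mul]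
        exact mul_nonpos_of_nonpos_of_nonneg hc.le (hξ0 x)
    have hθbd : ∀ c x, |θ c x| ≤ Real.exp (max c 0 * R) := by
      intro c x
      rw [abs_of_pos (Real.exp_pos _)]
      exact Real.exp_le_exp.2 (hθub c x)
    have hθlip : ∀ c, LipschitzWith ((|c| * Real.exp (max c 0 * R)).toNNReal) (θ c) := by
      intro c
      apply LipschitzWith.of_dist_le_mul
      intro x y
      rw [Real.coe_toNNReal _ (by positivity)]
      rw [Real.dist_eq]
      calc |θ c x - θ c y| ≤ Real.exp (max c 0 * R) * |c * ξ x - c * ξ y| :=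
            exp_sub_exp_abs_le _ _ _ (hθub c x) (hθub c y)
      _ = Real.exp (max c 0 * R) * (|c| * |ξ x - ξ y|) := by
          rw [← mul_sub, abs_mul]
      _ ≤ Real.exp (max c 0 * R) * (|c| * dist x y) := by
          have h1 : |ξ x - ξ y| ≤ dist x y := by
            have := hξlip.dist_le_mul x y
            rwa [NNReal.coe_one, one_mul, Real.dist_eq] at this
          have h2 : (0:ℝ) ≤ |c| := abs_nonneg c
          have h3 : (0:ℝ) ≤ Real.exp (max c 0 * R) := (Real.exp_pos _).le
          exact mul_le_mul_of_nonneg_left (mul_le_mul_of_nonneg_left h1 h2) h3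
      _ = |c| * Real.exp (max c 0 * R) * dist x y := by ring
    -- choose the multiplication operators
    choose P hP hPnorm using fun c : ℝ =>
      exists_mulOp (μ := μ) (E := EuclideanSpace ℂ (Fin m)) (θ c) (hθmeas c)
        (Real.exp_pos (max c 0 * R)).le (hθbd c)
    have hcommP : ∀ c : ℝ, ∀ v ∈ Dom, P c v ∈ Dom ∧
        ‖P c (D v) - D (P c v)‖ ≤ κ * ((|c| * Real.exp (max c 0 * R)).toNNReal : ℝ) * ‖v‖ ∧
        P c (P c (D v)) - (2:ℂ) • P c (D (P c v)) + D (P c (P c v)) = 0 := fun c v hv =>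
      hcomm (θ c) _ (hθlip c) ⟨_, hθbd c⟩ (P c) (hP c) v hv
    -- multiplicativity
    have Pmul : ∀ c c' : ℝ, ∀ w, P c (P c' w) = P (c + c') w := by
      intro c c' w
      apply Lp.ext
      filter_upwards [hP c (P c' w), hP c' w, hP (c + c') w] with x e1 e2 e3
      rw [e1, e2, e3, smul_smul, ← Complex.ofReal_mul, ← Real.exp_add]
      have h1 : c * ξ x + c' * ξ x = (c + c') * ξ x := by ring
      rw [h1]
    have P0 : ∀ w, P 0 w = w := by
      intro w
      apply Lp.ext
      filter_upwards [hP 0 w] with x e1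
      rw [e1]
      show ((Real.exp (0 * ξ x) : ℝ) : ℂ) • _ = _
      rw [zero_mul, Real.exp_zero, Complex.ofReal_one, one_smul]
    have hco : ∀ c c' : ℝ, ∀ w, P c' (P c w) = P c (P c' w) := by
      intro c c' w
      rw [Pmul, Pmul, add_comm]
    have PBop : ∀ c w, Bop (P c w) = P c (Bop w) := by
      intro c w
      apply Lp.ext
      filter_upwards [hBop (P c w), hP c w, hP c (Bop w), hBop w] with x e1 e2 e3 e4
      rw [e1, e2, e3, e4]
      exact (Matrix.toEuclideanCLM (𝕜 := ℂ) (b x)).map_smul _ _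
    have PBinv : ∀ c w, Binv (P c w) = P c (Binv w) := by
      intro c w
      conv_lhs => rw [← hBopBinv w]
      rw [← PBop, hBinvBop]
    -- product rule for the commutator
    have prodrule : ∀ c c' : ℝ, ∀ v ∈ Dom,
        P (c + c') (D v) - D (P (c + c') v)
          = P c (P c' (D v) - D (P c' v)) + P c' (P c (D v) - D (P c v)) := by
      intro c c' v hv
      obtain ⟨hAv, -, hsqA⟩ := hcommP c v hv
      obtain ⟨hBv, -, hsqB⟩ := hcommP c' v hv
      obtain ⟨hAAv, -, -⟩ := hcommP c (P c v) hAv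
      obtain ⟨hABv, -, -⟩ := hcommP c (P c' v) hBv
      obtain ⟨hBAv, -, -⟩ := hcommP c' (P c v) hAv
      obtain ⟨hBBv, -, -⟩ := hcommP c' (P c' v) hBv
      have hSae : ∀ w : Lp (EuclideanSpace ℂ (Fin m)) 2 μ,
          ((P c + P c') w : M → EuclideanSpace ℂ (Fin m)) =ᵐ[μ]
            fun x => ((θ c x + θ c' x : ℝ) : ℂ) • (w : M → EuclideanSpace ℂ (Fin m)) x := by
        intro w
        filter_upwards [hP c w, hP c' w, Lp.coeFn_add (P c w) (P c' w)] with x e1 e2 e3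
        rw [ContinuousLinearMap.add_apply, e3, Pi.add_apply, e1, e2]
        push_cast
        rw [add_smul]
      have hSbd : ∀ x, |θ c x + θ c' x|
          ≤ Real.exp (max c 0 * R) + Real.exp (max c' 0 * R) := fun x =>
        (abs_add_le _ _).trans (add_le_add (hθbd c x) (hθbd c' x))
      have hSlip : LipschitzWith ((|c| * Real.exp (max c 0 * R)).toNNReal
          + (|c'| * Real.exp (max c' 0 * R)).toNNReal) (fun x => θ c x + θ c' x) := by
        apply LipschitzWith.of_dist_le_mul
        intro x y
        have l1 := (hθlip c).dist_le_mul x y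
        have l2 := (hθlip c').dist_le_mul x y
        rw [Real.dist_eq] at l1 l2 ⊢
        push_cast
        calc |θ c x + θ c' x - (θ c y + θ c' y)|
            ≤ |θ c x - θ c y| + |θ c' x - θ c' y| := by
              have : θ c x + θ c' x - (θ c y + θ c' y)
                  = (θ c x - θ c y) + (θ c' x - θ c' y) := by ring
              rw [this]
              exact abs_add_le _ _
        _ ≤ _ := by
            rw [add_mul]
            exact add_le_add l1 l2
      obtain ⟨-, -, hsqS⟩ := hcomm (fun x => θ c x + θ c' x) _ hSlip
        ⟨_, hSbd⟩ (P c + P c') hSae v hv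
      simp only [ContinuousLinearMap.add_apply, map_add] at hsqS
      rw [hDadd _ hAv _ hBv] at hsqS
      simp only [map_add] at hsqS
      -- expand the outermost D over the four terms
      rw [hDadd _ (Dom.add_mem hAAv hBAv) _ (Dom.add_mem hABv hBBv),
        hDadd _ hAAv _ hBAv, hDadd _ hABv _ hBBv] at hsqS
      rw [hco c c' (D v), hco c c' v] at hsqS
      have hkey : P c (P c' (D v)) + D (P c (P c' v))
          = P c (D (P c' v)) + P c' (D (P c v)) := by
        have e1 := congrArg₂ (· - ·) (congrArg₂ (· - ·) hsqS hsqA) hsqB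
        simp only [sub_zero] at e1
        have e2 : (P c (P c' (D v)) + D (P c (P c' v)))
              + (P c (P c' (D v)) + D (P c (P c' v)))
            - ((P c (D (P c' v)) + P c' (D (P c v)))
              + (P c (D (P c' v)) + P c' (D (P c v)))) = 0 := by
          rw [← e1]
          simp only [two_smul]
          abel
        have e3 := sub_eq_zero.mp e2
        have e4 : (2:ℂ) • (P c (P c' (D v)) + D (P c (P c' v)))
            = (2:ℂ) • (P c (D (P c' v)) + P c' (D (P c v))) := by
          rw [two_smul, two_smul]
          exact e3
        exact smul_right_injective _ two_ne_zero e4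
      rw [← Pmul c c' (D v), ← Pmul c c' v, map_sub, map_sub, hco c c' (D v)]
      apply eq_of_sub_eq_sub_of_eq ?_ hkey.symm
      abel
    -- commutation of the commutator with multiplication operators
    have commrule : ∀ c c' : ℝ, ∀ v ∈ Dom,
        P c (D (P c' v)) - D (P c (P c' v)) = P c' (P c (D v) - D (P c v)) := by
      intro c c' v hv
      have h := prodrule c c' v hv
      rw [← Pmul c c' (D v), ← Pmul c c' v, map_sub, map_sub] at h
      rw [map_sub]
      apply eq_of_sub_eq_sub_of_eq ?_ h
      rw [hco c c' (D v)]
      abel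
    -- power rule
    have powrule : ∀ c : ℝ, ∀ n : ℕ, ∀ v ∈ Dom,
        P ((n + 1 : ℕ) * c) (D v) - D (P ((n + 1 : ℕ) * c) v)
          = ((n + 1 : ℕ) : ℂ) • (P ((n : ℕ) * c) (P c (D v) - D (P c v))) := by
      intro c n
      induction n with
      | zero =>
        intro v hv
        have h1 : ((0 + 1 : ℕ) : ℝ) * c = c := by push_cast; ring
        have h2 : ((0 : ℕ) : ℝ) * c = 0 := by push_cast; ring
        rw [h1, h2, P0]
        push_cast
        rw [one_smul]
      | succ n ih =>
        intro v hv
        have h1 : ((n + 1 + 1 : ℕ) : ℝ) * c = c + ((n + 1 : ℕ) : ℝ) * c := by push_cast; ring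
        rw [h1]
        have h2 := prodrule c (((n + 1 : ℕ) : ℝ) * c) v hv
        rw [h2, ih v hv]
        rw [(P c).map_smul]
        have h3 : ∀ w, P c (P (((n : ℕ) : ℝ) * c) w) = P (((n + 1 : ℕ) : ℝ) * c) w := by
          intro w
          rw [Pmul]
          congr 1
          push_cast
          ring
        rw [h3]
        have h4 : ((n + 1 + 1 : ℕ) : ℂ) = ((n + 1 : ℕ) : ℂ) + 1 := by push_cast; ring
        rw [h4, add_smul, one_smul]
    -- the refined commutator bound
    have refined : ∀ s : ℝ, 0 < s → ∀ v ∈ Dom,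
        ‖P s (D v) - D (P s v)‖ ≤ κ * s * ‖P s v‖ := by
      intro s hs v hv
      have hvs : P s v ∈ Dom := (hcommP s v hv).1
      have hbound : ∀ n : ℕ, ‖P s (D v) - D (P s v)‖
          ≤ κ * s * Real.exp (s * R / (n + 1)) * ‖P s v‖ := by
        intro n
        set c : ℝ := s / (n + 1) with hcdef
        have hnpos : (0:ℝ) < (n:ℝ) + 1 := by positivity
        have hcpos : 0 < c := div_pos hs hnpos
        -- identity : P (-s) (P s v) = v
        have hid : P (-s) (P s v) = v := by
          rw [hco, Pmul]
          have : s + -s = 0 := by ring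
          rw [this, P0]
        -- commutation step
        have hcm := commrule c (-s) (P s v) hvs
        rw [hid] at hcm
        -- power step
        have hpw := powrule c n v hv
        have hnc : ((n + 1 : ℕ) : ℝ) * c = s := by
          rw [hcdef]
          push_cast
          field_simp
        rw [hnc] at hpw
        -- combine
        rw [hcm] at hpw
        have hmv : ∀ w, P (((n : ℕ) : ℝ) * c) (P (-s) w) = P (-c) w := by
          intro w
          rw [Pmul]
          congr 1
          rw [hcdef]
          push_cast
          field_simp
          ring
        rw [hmv] at hpw
        rw [hpw]
        rw [norm_smul]
        have hn1 : ‖((n + 1 : ℕ) : ℂ)‖ = ((n:ℝ) + 1) := by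
          rw [Complex.norm_natCast]
          push_cast
          ring
        rw [hn1]
        -- bound the P (-c) factor
        have hPneg : ‖P (-c) (P c (D (P s v)) - D (P c (P s v)))‖
            ≤ ‖P c (D (P s v)) - D (P c (P s v))‖ := by
          have := hPnorm (-c) (P c (D (P s v)) - D (P c (P s v)))
          have hmax : max (-c) 0 = 0 := max_eq_right (by linarith)
          rw [hmax, zero_mul, Real.exp_zero, one_mul] at this
          exact this
        have hcomb := (hcommP c (P s v) hvs).2.1
        have hLc : (((|c| * Real.exp (max c 0 * R)).toNNReal : ℝ)) = c * Real.exp (c * R) := by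
          rw [Real.coe_toNNReal _ (by positivity)]
          rw [abs_of_pos hcpos, max_eq_left hcpos.le]
        rw [hLc] at hcomb
        calc ((n:ℝ) + 1) * ‖P (-c) (P c (D (P s v)) - D (P c (P s v)))‖
            ≤ ((n:ℝ) + 1) * ‖P c (D (P s v)) - D (P c (P s v))‖ := by
              exact mul_le_mul_of_nonneg_left hPneg (by positivity)
        _ ≤ ((n:ℝ) + 1) * (κ * (c * Real.exp (c * R)) * ‖P s v‖) := by
              exact mul_le_mul_of_nonneg_left hcomb (by positivity)
        _ = κ * s * Real.exp (s * R / (n + 1)) * ‖P s v‖ := by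
              rw [hcdef]
              push_cast
              rw [show s / ((n:ℝ) + 1) * R = s * R / ((n:ℝ) + 1) from by ring]
              have hne : ((n:ℝ) + 1) ≠ 0 := ne_of_gt hnpos
              have e : ((n:ℝ) + 1) * (s / ((n:ℝ) + 1)) = s := by field_simp
              linear_combination (κ * Real.exp (s * R / ((n:ℝ) + 1)) * ‖P s v‖) * e
      -- take the limit n → ∞
      have hlim : Filter.Tendsto (fun n : ℕ => κ * s * Real.exp (s * R / (n + 1)) * ‖P s v‖)
          Filter.atTop (nhds (κ * s * ‖P s v‖)) := by
        have h1 : Filter.Tendsto (fun n : ℕ => s * R / ((n : ℝ) + 1)) Filter.atTop (nhds 0) := by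
          have h0 := (tendsto_const_div_atTop_nhds_zero_nat (s * R)).comp
            (Filter.tendsto_add_atTop_nat 1)
          have he : (fun n : ℕ => s * R / ((n : ℝ) + 1))
              = (fun n : ℕ => s * R / (n : ℝ)) ∘ (fun a => a + 1) := by
            funext n
            simp only [Function.comp_apply]
            push_cast
            ring
          rw [he]
          exact h0
        have h2 : Filter.Tendsto (fun n : ℕ => Real.exp (s * R / ((n : ℝ) + 1)))
            Filter.atTop (nhds 1) := by
          have := (Real.continuous_exp.tendsto 0).comp h1
          rwa [Real.exp_zero] at this
        have h3 := (h2.const_mul (κ * s)).mul_const (‖P s v‖)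
        rw [mul_one] at h3
        exact h3
      exact ge_of_tendsto' hlim hbound
    -- square-norm as an integral, and integrability of the pointwise square norm
    have hIntNorm : ∀ w : Lp (EuclideanSpace ℂ (Fin m)) 2 μ,
        Integrable (fun x => ‖(w : M → EuclideanSpace ℂ (Fin m)) x‖^2) μ := by
      intro w
      have h := (L2.integrable_inner (𝕜 := ℂ) w w).re
      apply h.congr
      filter_upwards with x
      exact inner_self_eq_norm_sq (𝕜 := ℂ) _
    have hnormint : ∀ w : Lp (EuclideanSpace ℂ (Fin m)) 2 μ,
        ‖w‖^2 = ∫ x, ‖(w : M → EuclideanSpace ℂ (Fin m)) x‖^2 ∂μ := by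
      intro w
      have e1 : (‖w‖ : ℝ)^2 = RCLike.re (inner (𝕜 := ℂ) w w) :=
        (inner_self_eq_norm_sq (𝕜 := ℂ) w).symm
      rw [e1, L2.inner_def]
      rw [← integral_re (L2.integrable_inner (𝕜 := ℂ) w w)]
      apply integral_congr_ae
      filter_upwards with x
      exact inner_self_eq_norm_sq (𝕜 := ℂ) _
    have h7gen : ∀ z : ℂ, (Complex.I * (starRingEnd ℂ) z - Complex.I * z).re = 2 * z.im := by
      intro z
      simp only [Complex.sub_re, Complex.mul_re, Complex.I_re, Complex.I_im,
        Complex.conj_re, Complex.conj_im]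
      ring
    -- the contraction estimate for the conjugated group
    have key : ∀ s : ℝ, 0 < s → ∀ w : Lp (EuclideanSpace ℂ (Fin m)) 2 μ,
        (inner (𝕜 := ℂ) (Binv (P s (V t w))) (P s (V t w))).re
          ≤ Real.exp (2 * κ * CB * s * |t|)
            * (inner (𝕜 := ℂ) (Binv (P s w)) (P s w)).re := by
      intro s hs
      have hDomcase : ∀ v ∈ Dom,
          (inner (𝕜 := ℂ) (Binv (P s (V t v))) (P s (V t v))).re
            ≤ Real.exp (2 * κ * CB * s * |t|)
              * (inner (𝕜 := ℂ) (Binv (P s v)) (P s v)).re := by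
        intro v hv
        set G : ℝ → ℝ := fun τ =>
          (inner (𝕜 := ℂ) (Binv (P s (V τ v))) (P s (V τ v))).re with hGdef
        set G' : ℝ → ℝ := fun τ => 2 * (inner (𝕜 := ℂ)
            (P s (D (V τ v)) - D (P s (V τ v))) (P s (V τ v))).im with hG'def
        have hG : ∀ τ, HasDerivAt G (G' τ) τ := by
          intro τ
          have hfτ : V τ v ∈ Dom := hVdom τ v hv
          have hgτ : P s (V τ v) ∈ Dom := (hcommP s (V τ v) hfτ).1
          have h1 : HasDerivAt (fun σ => V σ v) (Complex.I • V τ (Bop (D v))) τ :=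
            hVderiv τ v hv
          have h2 : HasDerivAt (fun σ => P s (V σ v))
              (P s (Complex.I • V τ (Bop (D v)))) τ := by
            have := ((P s).restrictScalars ℝ).hasFDerivAt.comp_hasDerivAt τ h1
            exact this
          have h3 : HasDerivAt (fun σ => Binv (P s (V σ v)))
              (Binv (P s (Complex.I • V τ (Bop (D v))))) τ := by
            have := (Binv.restrictScalars ℝ).hasFDerivAt.comp_hasDerivAt τ h2
            exact this
          have h4 := HasDerivAt.inner (𝕜 := ℂ) h3 h2
          have h5 := Complex.reCLM.hasFDerivAt.comp_hasDerivAt τ h4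
          have hww : V τ (Bop (D v)) = Bop (D (V τ v)) := hVBD τ v hv
          have hval : Complex.reCLM
              (inner (𝕜 := ℂ) (Binv (P s (V τ v))) (P s (Complex.I • V τ (Bop (D v))))
               + inner (𝕜 := ℂ) (Binv (P s (Complex.I • V τ (Bop (D v))))) (P s (V τ v)))
              = G' τ := by
            rw [hww, (P s).map_smul, Binv.map_smul, PBinv s (Bop (D (V τ v))),
              hBinvBop (D (V τ v))]
            rw [inner_smul_right, inner_smul_left, Complex.conj_I]
            have e1 : (inner (𝕜 := ℂ) (Binv (P s (V τ v))) (P s (Bop (D (V τ v)))))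
                = (starRingEnd ℂ) (inner (𝕜 := ℂ) (P s (D (V τ v))) (P s (V τ v))) := by
              rw [← PBop, ← hBsym, hBopBinv, ← inner_conj_symm]
            rw [e1]
            have e2 : Complex.I * (starRingEnd ℂ)
                  (inner (𝕜 := ℂ) (P s (D (V τ v))) (P s (V τ v)))
                + -Complex.I * (inner (𝕜 := ℂ) (P s (D (V τ v))) (P s (V τ v)))
                = Complex.I * (starRingEnd ℂ)
                  (inner (𝕜 := ℂ) (P s (D (V τ v))) (P s (V τ v)))
                - Complex.I * (inner (𝕜 := ℂ) (P s (D (V τ v))) (P s (V τ v))) := by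
              ring
            have e3 := h7gen (inner (𝕜 := ℂ) (P s (D (V τ v))) (P s (V τ v)))
            show (Complex.I * (starRingEnd ℂ)
                  (inner (𝕜 := ℂ) (P s (D (V τ v))) (P s (V τ v)))
                + -Complex.I * (inner (𝕜 := ℂ) (P s (D (V τ v))) (P s (V τ v)))).re = G' τ
            rw [e2, e3]
            -- now split the inner product
            have e4 : (inner (𝕜 := ℂ) (P s (D (V τ v))) (P s (V τ v)))
                = inner (𝕜 := ℂ) (P s (D (V τ v)) - D (P s (V τ v))) (P s (V τ v))
                  + inner (𝕜 := ℂ) (D (P s (V τ v))) (P s (V τ v)) := by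
              rw [← inner_add_left, sub_add_cancel]
            rw [hG'def, e4]
            simp only [Complex.add_im]
            rw [hIm _ hgτ]
            ring
          rw [hval] at h5
          exact h5
        have hGb : ∀ τ, |G' τ| ≤ (2 * κ * CB * s) * G τ := by
          intro τ
          have hfτ : V τ v ∈ Dom := hVdom τ v hv
          have hgτ : P s (V τ v) ∈ Dom := (hcommP s (V τ v) hfτ).1
          have hΞ := refined s hs (V τ v) hfτ
          have h1 : |(inner (𝕜 := ℂ) (P s (D (V τ v)) - D (P s (V τ v))) (P s (V τ v))).im|
              ≤ ‖P s (D (V τ v)) - D (P s (V τ v))‖ * ‖P s (V τ v)‖ := by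
            calc |(inner (𝕜 := ℂ) (P s (D (V τ v)) - D (P s (V τ v))) (P s (V τ v))).im|
                ≤ ‖(inner (𝕜 := ℂ)
                    (P s (D (V τ v)) - D (P s (V τ v))) (P s (V τ v)))‖ :=
                  Complex.abs_im_le_norm _
            _ = ‖(inner (𝕜 := ℂ) (P s (D (V τ v)) - D (P s (V τ v))) (P s (V τ v)))‖ :=
                  rfl
            _ ≤ _ := norm_inner_le_norm _ _
          have h2 : ‖P s (V τ v)‖^2 ≤ CB * G τ := by
            rw [hGdef]
            exact hnormsq (P s (V τ v))
          rw [hG'def]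
          have h3 : ‖P s (D (V τ v)) - D (P s (V τ v))‖ * ‖P s (V τ v)‖
              ≤ κ * s * ‖P s (V τ v)‖^2 := by
            have := mul_le_mul_of_nonneg_right hΞ (norm_nonneg (P s (V τ v)))
            calc ‖P s (D (V τ v)) - D (P s (V τ v))‖ * ‖P s (V τ v)‖
                ≤ κ * s * ‖P s (V τ v)‖ * ‖P s (V τ v)‖ := this
            _ = κ * s * ‖P s (V τ v)‖^2 := by ring
          have habs : |2 * (inner (𝕜 := ℂ)
              (P s (D (V τ v)) - D (P s (V τ v))) (P s (V τ v))).im|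
              = 2 * |(inner (𝕜 := ℂ)
                (P s (D (V τ v)) - D (P s (V τ v))) (P s (V τ v))).im| := by
            rw [abs_mul]
            norm_num
          rw [habs]
          have hκs : (0:ℝ) ≤ κ * s := by positivity
          nlinarith [h1, h2, h3]
        have hGron := gronwall_abs hG (a := 2 * κ * CB * s) (by positivity) hGb t
        have hG0 : G 0 = (inner (𝕜 := ℂ) (Binv (P s v)) (P s v)).re := by
          rw [hGdef]
          simp only
          rw [hV0app]
        rw [hG0] at hGron
        exact hGron
      intro w
      have hclosed : IsClosed {w : Lp (EuclideanSpace ℂ (Fin m)) 2 μ |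
          (inner (𝕜 := ℂ) (Binv (P s (V t w))) (P s (V t w))).re
            ≤ Real.exp (2 * κ * CB * s * |t|)
              * (inner (𝕜 := ℂ) (Binv (P s w)) (P s w)).re} := by
        apply isClosed_le
        · exact Complex.continuous_re.comp
            ((Binv.continuous.comp ((P s).continuous.comp (V t).continuous)).inner
              ((P s).continuous.comp (V t).continuous))
        · exact continuous_const.mul (Complex.continuous_re.comp
            ((Binv.continuous.comp (P s).continuous).inner (P s).continuous))
      have hsub : (Dom : Set (Lp (EuclideanSpace ℂ (Fin m)) 2 μ)) ⊆
          {w : Lp (EuclideanSpace ℂ (Fin m)) 2 μ |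
            (inner (𝕜 := ℂ) (Binv (P s (V t w))) (P s (V t w))).re
              ≤ Real.exp (2 * κ * CB * s * |t|)
                * (inner (𝕜 := ℂ) (Binv (P s w)) (P s w)).re} := fun v hv => hDomcase v hv
      have hcl := closure_minimal hsub hclosed
      rw [hdense.closure_eq] at hcl
      exact hcl (Set.mem_univ w)
    -- P s u = u
    have hPu : ∀ s' : ℝ, P s' u = u := by
      intro s'
      apply Lp.ext
      filter_upwards [hP s' u, hu] with x e1 e2
      rw [e1]
      simp only [hθdef]
      by_cases hx : x ∈ K
      · have hξx : ξ x = 0 := by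
          rw [hξdef]
          simp only
          rw [Metric.infDist_zero_of_mem hx]
          exact min_eq_left hR0.le
        rw [hξx, mul_zero, Real.exp_zero, Complex.ofReal_one, one_smul]
      · rw [e2 hx, smul_zero]
    set A : Set M := {x | R ≤ Metric.infDist x K} with hAdef
    have hAmeas : MeasurableSet A :=
      (isClosed_le continuous_const (Metric.continuous_infDist_pt K)).measurableSet
    set f := V t u with hfdef
    have est : ∀ s : ℝ, 0 < s →
        (∫ x in A, ‖(f : M → EuclideanSpace ℂ (Fin m)) x‖^2 ∂μ)
          ≤ CB * (‖Binv‖ * ‖u‖^2) * Real.exp (2 * κ * CB * s * |t|)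
            * Real.exp (-(2 * s * R)) := by
      intro s hs
      have h1 := key s hs u
      rw [hPu s] at h1
      have h2 : (inner (𝕜 := ℂ) (Binv u) u).re ≤ ‖Binv‖ * ‖u‖^2 := by
        calc (inner (𝕜 := ℂ) (Binv u) u).re
            ≤ ‖(inner (𝕜 := ℂ) (Binv u) u)‖ := Complex.re_le_norm _
        _ = ‖(inner (𝕜 := ℂ) (Binv u) u)‖ := rfl
        _ ≤ ‖Binv u‖ * ‖u‖ := norm_inner_le_norm _ _
        _ ≤ ‖Binv‖ * ‖u‖ * ‖u‖ :=
            mul_le_mul_of_nonneg_right (Binv.le_opNorm u) (norm_nonneg _)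
        _ = ‖Binv‖ * ‖u‖^2 := by ring
      have h3 : ‖P s f‖^2 ≤ CB * (‖Binv‖ * ‖u‖^2) * Real.exp (2 * κ * CB * s * |t|) := by
        calc ‖P s f‖^2 ≤ CB * (inner (𝕜 := ℂ) (Binv (P s f)) (P s f)).re := hnormsq _
        _ ≤ CB * (Real.exp (2 * κ * CB * s * |t|) * (inner (𝕜 := ℂ) (Binv u) u).re) :=
            mul_le_mul_of_nonneg_left h1 hCBnn
        _ ≤ CB * (Real.exp (2 * κ * CB * s * |t|) * (‖Binv‖ * ‖u‖^2)) := by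
            have := mul_le_mul_of_nonneg_left h2 (Real.exp_pos (2 * κ * CB * s * |t|)).le
            exact mul_le_mul_of_nonneg_left this hCBnn
        _ = CB * (‖Binv‖ * ‖u‖^2) * Real.exp (2 * κ * CB * s * |t|) := by ring
      -- integral lower bound
      have h4 : ∀ᵐ x ∂μ, x ∈ A →
          ‖(P s f : M → EuclideanSpace ℂ (Fin m)) x‖^2
            = Real.exp (2 * s * R) * ‖(f : M → EuclideanSpace ℂ (Fin m)) x‖^2 := by
        filter_upwards [hP s f] with x e1 hxA
        rw [e1]
        simp only [hθdef]
        have hξx : ξ x = R := by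
          rw [hξdef]
          simp only
          exact min_eq_right hxA
        rw [hξx, norm_smul, Complex.norm_real, Real.norm_eq_abs]
        rw [_root_.abs_of_pos (Real.exp_pos _)]
        rw [mul_pow]
        have hsq : Real.exp (s * R)^2 = Real.exp (2 * s * R) := by
          rw [sq, ← Real.exp_add]
          congr 1
          ring
        rw [hsq]
      have h5 : (∫ x in A, ‖(P s f : M → EuclideanSpace ℂ (Fin m)) x‖^2 ∂μ)
          = Real.exp (2 * s * R)
            * ∫ x in A, ‖(f : M → EuclideanSpace ℂ (Fin m)) x‖^2 ∂μ := by
        rw [setIntegral_congr_ae hAmeas h4]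
        exact integral_const_mul _ _
      have h6 : (∫ x in A, ‖(P s f : M → EuclideanSpace ℂ (Fin m)) x‖^2 ∂μ)
          ≤ ‖P s f‖^2 := by
        rw [hnormint (P s f)]
        apply setIntegral_le_integral (hIntNorm (P s f))
        filter_upwards with x
        positivity
      have h7 : Real.exp (2 * s * R)
          * (∫ x in A, ‖(f : M → EuclideanSpace ℂ (Fin m)) x‖^2 ∂μ)
          ≤ CB * (‖Binv‖ * ‖u‖^2) * Real.exp (2 * κ * CB * s * |t|) := by
        rw [← h5]
        exact le_trans h6 h3
      have h8 := mul_le_mul_of_nonneg_left h7 (Real.exp_pos (-(2 * s * R))).le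
      have h9 : Real.exp (-(2 * s * R)) * Real.exp (2 * s * R) = 1 := by
        rw [← Real.exp_add]
        norm_num
      calc (∫ x in A, ‖(f : M → EuclideanSpace ℂ (Fin m)) x‖^2 ∂μ)
          = Real.exp (-(2 * s * R)) * (Real.exp (2 * s * R)
            * ∫ x in A, ‖(f : M → EuclideanSpace ℂ (Fin m)) x‖^2 ∂μ) := by
            rw [← mul_assoc, h9, one_mul]
      _ ≤ Real.exp (-(2 * s * R))
            * (CB * (‖Binv‖ * ‖u‖^2) * Real.exp (2 * κ * CB * s * |t|)) := h8
      _ = CB * (‖Binv‖ * ‖u‖^2) * Real.exp (2 * κ * CB * s * |t|)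
            * Real.exp (-(2 * s * R)) := by ring
    -- let s → ∞
    have hlim : Filter.Tendsto (fun s : ℝ => CB * (‖Binv‖ * ‖u‖^2)
        * Real.exp (2 * κ * CB * s * |t|) * Real.exp (-(2 * s * R)))
        Filter.atTop (nhds 0) := by
      have hcoef : 2 * κ * CB * |t| - 2 * R < 0 := by nlinarith [hR]
      have heq : (fun s : ℝ => CB * (‖Binv‖ * ‖u‖^2)
          * Real.exp (2 * κ * CB * s * |t|) * Real.exp (-(2 * s * R)))
          = fun s : ℝ => CB * (‖Binv‖ * ‖u‖^2)
            * Real.exp (s * (2 * κ * CB * |t| - 2 * R)) := by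
        funext s
        rw [mul_assoc, ← Real.exp_add]
        congr 2
        ring
      rw [heq]
      have h1 : Filter.Tendsto (fun s : ℝ => s * (2 * κ * CB * |t| - 2 * R))
          Filter.atTop Filter.atBot :=
        Filter.Tendsto.atTop_mul_const_of_neg hcoef Filter.tendsto_id
      have h2 := Real.tendsto_exp_atBot.comp h1
      have h3 := h2.const_mul (CB * (‖Binv‖ * ‖u‖^2))
      rwa [mul_zero] at h3
    have hXnn : 0 ≤ ∫ x in A, ‖(f : M → EuclideanSpace ℂ (Fin m)) x‖^2 ∂μ :=
      integral_nonneg fun x => by positivity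
    have hX0 : (∫ x in A, ‖(f : M → EuclideanSpace ℂ (Fin m)) x‖^2 ∂μ) ≤ 0 := by
      apply ge_of_tendsto hlim
      filter_upwards [Filter.eventually_gt_atTop 0] with s hs
      exact est s hs
    have hXeq : (∫ x in A, ‖(f : M → EuclideanSpace ℂ (Fin m)) x‖^2 ∂μ) = 0 :=
      le_antisymm hX0 hXnn
    have hf0 : (fun x => ‖(f : M → EuclideanSpace ℂ (Fin m)) x‖^2)
        =ᵐ[μ.restrict A] 0 := by
      have hae : 0 ≤ᵐ[μ.restrict A]
          fun x => ‖(f : M → EuclideanSpace ℂ (Fin m)) x‖^2 := by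
        filter_upwards with x
        positivity
      exact (integral_eq_zero_iff_of_nonneg_ae hae ((hIntNorm f).restrict)).mp hXeq
    have hf0' : ∀ᵐ x ∂μ, x ∈ A → ‖(f : M → EuclideanSpace ℂ (Fin m)) x‖^2 = 0 :=
      (ae_restrict_iff' hAmeas).mp hf0
    filter_upwards [hf0'] with x hx hRx
    have h10 := hx hRx
    have h11 : ‖(f : M → EuclideanSpace ℂ (Fin m)) x‖ = 0 := by
      nlinarith [norm_nonneg ((f : M → EuclideanSpace ℂ (Fin m)) x), h10]
    exact norm_eq_zero.mp h11




  have hQ : ∀ᵐ x ∂μ, ∀ q : ℚ,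
      (κ * CB * |t| < (q : ℝ) ∧ (q : ℝ) ≤ Metric.infDist x K) →
        (V t u : M → EuclideanSpace ℂ (Fin m)) x = 0 := by
    rw [ae_all_iff]
    intro q
    by_cases hq : κ * CB * |t| < (q : ℝ)
    · filter_upwards [main q hq] with x hx h
      exact hx h.2
    · filter_upwards with x h
      exact absurd h.1 hq
  filter_upwards [hQ] with x hx hdist
  obtain ⟨q, hq1, hq2⟩ := exists_rat_btwn hdist
  exact hx q ⟨hq1, hq2.le⟩
end
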